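/- arXiv:math/0206104 — 5 statements merged into one kernel-verified Lean document; each statement's English description precedes it below -/
import Mathlib

section
/- Let A ∈ M_2(F[t]) be hermitian with det(A) ≠ 0 and gcd(A) = 1. Then A is congruent to the diagonal matrix diag(1, det(A)). -/
open Polynomial

/-- The involution of `F[t]` fixing `F` and sending `t ↦ -t`. -/
noncomputable def pstar {F : Type*} [Field F] (p : F[X]) : F[X] := p.comp (-X)

/-- The induced involution on matrices: transpose composed with entrywise `pstar`. -/
noncomputable def mstar {F : Type*} [Field F] {n : ℕ}
    (A : Matrix (Fin n) (Fin n) F[X]) : Matrix (Fin n) (Fin n) F[X] :=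
  Matrix.of fun i j => pstar (A j i)

/-- `A` and `B` are congruent if `B = S* A S` for some `S ∈ GL_n(F[t])`. -/
def PolyCongruent {F : Type*} [Field F] {n : ℕ}
    (A B : Matrix (Fin n) (Fin n) F[X]) : Prop :=
  ∃ S : Matrix (Fin n) (Fin n) F[X], IsUnit S.det ∧ B = mstar S * A * S

namespace Herm
set_option linter.unusedVariables false
variable {F : Type*} [Field F]
@[simp] lemma pstar_add (p q : F[X]) : pstar (p + q) = pstar p + pstar q := by unfold pstar; exact add_comp
@[simp] lemma pstar_mul (p q : F[X]) : pstar (p * q) = pstar p * pstar q := by unfold pstar; exact mul_comp ..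
@[simp] lemma pstar_one : pstar (1 : F[X]) = 1 := one_comp
@[simp] lemma pstar_zero : pstar (0 : F[X]) = 0 := zero_comp
@[simp] lemma pstar_C (c : F) : pstar (C c) = C c := C_comp
@[simp] lemma pstar_X : pstar (X : F[X]) = -X := X_comp
@[simp] lemma pstar_neg (p : F[X]) : pstar (-p) = - pstar p := neg_comp
@[simp] lemma pstar_sub (p q : F[X]) : pstar (p - q) = pstar p - pstar q := sub_comp
@[simp] lemma pstar_pow (p : F[X]) (n : ℕ) : pstar (p ^ n) = pstar p ^ n := pow_comp _ _ _
@[simp] lemma pstar_pstar (p : F[X]) : pstar (pstar p) = p := by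
  unfold pstar; rw [comp_assoc, neg_comp, X_comp, neg_neg, comp_X]
lemma pstar_eval (p : F[X]) (γ : F) : (pstar p).eval γ = p.eval (-γ) := by
  unfold pstar; rw [eval_comp]; simp
@[simp] lemma pstar_natDegree (p : F[X]) : (pstar p).natDegree = p.natDegree := by
  unfold pstar; rw [natDegree_comp]; simp
lemma pstar_eq_zero {p : F[X]} : pstar p = 0 ↔ p = 0 := by
  constructor
  · intro h; have := congrArg pstar h; simpa using this
  · rintro rfl; simp
noncomputable def val (a b d x y : F[X]) : F[X] :=
  pstar x * (a * x + b * y) + pstar y * (pstar b * x + d * y)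
def Rep (a b d : F[X]) : Prop := ∃ x y, val a b d x y = 1
noncomputable def tA (s₁ s₂ s₃ s₄ a b d : F[X]) : F[X] :=
  pstar s₁ * (a * s₁ + b * s₃) + pstar s₃ * (pstar b * s₁ + d * s₃)
noncomputable def tB (s₁ s₂ s₃ s₄ a b d : F[X]) : F[X] :=
  pstar s₁ * (a * s₂ + b * s₄) + pstar s₃ * (pstar b * s₂ + d * s₄)
noncomputable def tD (s₁ s₂ s₃ s₄ a b d : F[X]) : F[X] :=
  pstar s₂ * (a * s₂ + b * s₄) + pstar s₄ * (pstar b * s₂ + d * s₄)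
variable {a b d : F[X]}
lemma val_trans (ha : pstar a = a) (hd : pstar d = d) (s₁ s₂ s₃ s₄ x y : F[X]) :
    val (tA s₁ s₂ s₃ s₄ a b d) (tB s₁ s₂ s₃ s₄ a b d) (tD s₁ s₂ s₃ s₄ a b d) x y
      = val a b d (s₁ * x + s₂ * y) (s₃ * x + s₄ * y) := by
  simp only [val, tA, tB, tD, pstar_add, pstar_mul, pstar_pstar, ha, hd]; ring
lemma tA_herm (ha : pstar a = a) (hd : pstar d = d) (s₁ s₂ s₃ s₄ : F[X]) :
    pstar (tA s₁ s₂ s₃ s₄ a b d) = tA s₁ s₂ s₃ s₄ a b d := by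
  simp only [tA, pstar_add, pstar_mul, pstar_pstar, ha, hd]; ring
lemma tD_herm (ha : pstar a = a) (hd : pstar d = d) (s₁ s₂ s₃ s₄ : F[X]) :
    pstar (tD s₁ s₂ s₃ s₄ a b d) = tD s₁ s₂ s₃ s₄ a b d := by
  simp only [tD, pstar_add, pstar_mul, pstar_pstar, ha, hd]; ring
lemma det_trans (ha : pstar a = a) (hd : pstar d = d) (s₁ s₂ s₃ s₄ : F[X]) :
    tA s₁ s₂ s₃ s₄ a b d * tD s₁ s₂ s₃ s₄ a b d
      - tB s₁ s₂ s₃ s₄ a b d * pstar (tB s₁ s₂ s₃ s₄ a b d)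
      = (s₁ * s₄ - s₂ * s₃) * pstar (s₁ * s₄ - s₂ * s₃) * (a * d - b * pstar b) := by
  simp only [tA, tB, tD, pstar_add, pstar_mul, pstar_sub, pstar_pstar, ha, hd]; ring
lemma tA_comp (ha : pstar a = a) (hd : pstar d = d) (s₁ s₂ s₃ s₄ r₁ r₂ r₃ r₄ : F[X]) :
    tA r₁ r₂ r₃ r₄ (tA s₁ s₂ s₃ s₄ a b d) (tB s₁ s₂ s₃ s₄ a b d) (tD s₁ s₂ s₃ s₄ a b d)
      = tA (s₁*r₁ + s₂*r₃) (s₁*r₂ + s₂*r₄) (s₃*r₁ + s₄*r₃) (s₃*r₂ + s₄*r₄) a b d := by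
  simp only [tA, tB, tD, pstar_add, pstar_mul, pstar_pstar, ha, hd]; ring
lemma tB_comp (ha : pstar a = a) (hd : pstar d = d) (s₁ s₂ s₃ s₄ r₁ r₂ r₃ r₄ : F[X]) :
    tB r₁ r₂ r₃ r₄ (tA s₁ s₂ s₃ s₄ a b d) (tB s₁ s₂ s₃ s₄ a b d) (tD s₁ s₂ s₃ s₄ a b d)
      = tB (s₁*r₁ + s₂*r₃) (s₁*r₂ + s₂*r₄) (s₃*r₁ + s₄*r₃) (s₃*r₂ + s₄*r₄) a b d := by
  simp only [tA, tB, tD, pstar_add, pstar_mul, pstar_pstar, ha, hd]; ring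
lemma tD_comp (ha : pstar a = a) (hd : pstar d = d) (s₁ s₂ s₃ s₄ r₁ r₂ r₃ r₄ : F[X]) :
    tD r₁ r₂ r₃ r₄ (tA s₁ s₂ s₃ s₄ a b d) (tB s₁ s₂ s₃ s₄ a b d) (tD s₁ s₂ s₃ s₄ a b d)
      = tD (s₁*r₁ + s₂*r₃) (s₁*r₂ + s₂*r₄) (s₃*r₁ + s₄*r₃) (s₃*r₂ + s₄*r₄) a b d := by
  simp only [tA, tB, tD, pstar_add, pstar_mul, pstar_pstar, ha, hd]; ring
lemma tA_id : tA 1 0 0 1 a b d = a := by simp [tA]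
lemma tB_id : tB 1 0 0 1 a b d = b := by simp [tB]
lemma tD_id : tD 1 0 0 1 a b d = d := by simp [tD]

-- new stuff
def Gcd1 (a b d : F[X]) : Prop := Ideal.span ({a, b, pstar b, d} : Set F[X]) = ⊤

lemma mem4 {a b d x : F[X]} (c₁ c₂ c₃ c₄ : F[X]) (hx : x = c₁*a + c₂*b + c₃*(pstar b) + c₄*d) :
    x ∈ Ideal.span ({a, b, pstar b, d} : Set F[X]) := by
  subst hx
  apply Ideal.add_mem
  apply Ideal.add_mem
  apply Ideal.add_mem
  all_goals exact Ideal.mul_mem_left _ _ (Ideal.subset_span (by simp))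

lemma tA_mem (s₁ s₂ s₃ s₄ : F[X]) :
    tA s₁ s₂ s₃ s₄ a b d ∈ Ideal.span ({a, b, pstar b, d} : Set F[X]) :=
  mem4 (pstar s₁*s₁) (pstar s₁*s₃) (pstar s₃*s₁) (pstar s₃*s₃) (by unfold tA; ring)

lemma tB_mem (s₁ s₂ s₃ s₄ : F[X]) :
    tB s₁ s₂ s₃ s₄ a b d ∈ Ideal.span ({a, b, pstar b, d} : Set F[X]) :=
  mem4 (pstar s₁*s₂) (pstar s₁*s₄) (pstar s₃*s₂) (pstar s₃*s₄) (by unfold tB; ring)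

lemma tD_mem (s₁ s₂ s₃ s₄ : F[X]) :
    tD s₁ s₂ s₃ s₄ a b d ∈ Ideal.span ({a, b, pstar b, d} : Set F[X]) :=
  mem4 (pstar s₂*s₂) (pstar s₂*s₄) (pstar s₄*s₂) (pstar s₄*s₄) (by unfold tD; ring)

lemma pstar_tB_mem (ha : pstar a = a) (hd : pstar d = d) (s₁ s₂ s₃ s₄ : F[X]) :
    pstar (tB s₁ s₂ s₃ s₄ a b d) ∈ Ideal.span ({a, b, pstar b, d} : Set F[X]) :=
  mem4 (s₁*pstar s₂) (s₃*pstar s₂) (s₁*pstar s₄) (s₃*pstar s₄)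
    (by simp only [tB, pstar_add, pstar_mul, pstar_pstar, ha, hd]; ring)

lemma gcd1_trans (ha : pstar a = a) (hd : pstar d = d) (s₁ s₂ s₃ s₄ r₁ r₂ r₃ r₄ : F[X])
    (e₁ : s₁*r₁ + s₂*r₃ = 1) (e₂ : s₁*r₂ + s₂*r₄ = 0)
    (e₃ : s₃*r₁ + s₄*r₃ = 0) (e₄ : s₃*r₂ + s₄*r₄ = 1) (hg : Gcd1 a b d) :
    Gcd1 (tA s₁ s₂ s₃ s₄ a b d) (tB s₁ s₂ s₃ s₄ a b d) (tD s₁ s₂ s₃ s₄ a b d) := by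
  set a' := tA s₁ s₂ s₃ s₄ a b d
  set b' := tB s₁ s₂ s₃ s₄ a b d
  set d' := tD s₁ s₂ s₃ s₄ a b d
  have ha' : pstar a' = a' := tA_herm ha hd _ _ _ _
  have hd' : pstar d' = d' := tD_herm ha hd _ _ _ _
  have key : ∀ x ∈ ({a, b, pstar b, d} : Set F[X]),
      x ∈ Ideal.span ({a', b', pstar b', d'} : Set F[X]) := by
    have cA : tA r₁ r₂ r₃ r₄ a' b' d' = a := by
      rw [tA_comp ha hd, e₁, e₂, e₃, e₄, tA_id]
    have cB : tB r₁ r₂ r₃ r₄ a' b' d' = b := by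
      rw [tB_comp ha hd, e₁, e₂, e₃, e₄, tB_id]
    have cD : tD r₁ r₂ r₃ r₄ a' b' d' = d := by
      rw [tD_comp ha hd, e₁, e₂, e₃, e₄, tD_id]
    intro x hx
    rcases hx with rfl | rfl | rfl | rfl
    · rw [← cA]; exact tA_mem _ _ _ _
    · rw [← cB]; exact tB_mem _ _ _ _
    · rw [← congrArg pstar cB]; exact pstar_tB_mem ha' hd' _ _ _ _
    · rw [← cD]; exact tD_mem _ _ _ _
  unfold Gcd1 at hg ⊢
  rw [eq_top_iff, ← hg]
  exact Ideal.span_le.mpr key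

lemma val_swap (x y : F[X]) : val d (pstar b) a x y = val a b d y x := by
  simp only [val, pstar_pstar]; ring

lemma herm_eval_neg {h : F[X]} (hh : pstar h = h) (γ : F) : h.eval (-γ) = h.eval γ := by
  rw [← pstar_eval, hh]

lemma herm_factor (h2 : (2:F) ≠ 0) {h : F[X]} (hh : pstar h = h) {γ : F} (hr : h.eval γ = 0) :
    ∃ k, h = ((X - C γ) * (X + C γ)) * k ∧ pstar k = k := by
  have hq : pstar ((X - C γ) * (X + C γ)) = (X - C γ) * (X + C γ) := by
    simp only [pstar_mul, pstar_sub, pstar_add, pstar_X, pstar_C]; ring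
  have h1 : (X - C γ : F[X]) ≠ 0 := X_sub_C_ne_zero γ
  have h2' : (X + C γ : F[X]) ≠ 0 := by
    have := X_sub_C_ne_zero (-γ); rwa [map_neg, sub_neg_eq_add] at this
  have hqne : ((X - C γ) * (X + C γ) : F[X]) ≠ 0 := mul_ne_zero h1 h2'
  have hdvd : ((X - C γ) * (X + C γ)) ∣ h := by
    by_cases hγ : γ = 0
    · subst hγ
      simp only [map_zero, sub_zero, add_zero]
      obtain ⟨k₁, hk₁⟩ := (dvd_iff_isRoot).mpr (by simpa using hr)
      rw [map_zero, sub_zero] at hk₁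
      have hk₁s : pstar k₁ = -k₁ := by
        have h0 : X * k₁ = X * (- pstar k₁) := by
          conv_lhs => rw [← hk₁, ← hh, hk₁]
          simp only [pstar_mul, pstar_X]; ring
        have h1' := mul_left_cancel₀ (X_ne_zero) h0
        have := congrArg Neg.neg h1'
        simpa using this.symm
      have hk₁0 : k₁.eval 0 = 0 := by
        have e := congrArg (Polynomial.eval (0:F)) hk₁s
        rw [pstar_eval, neg_zero, eval_neg] at e
        have h20 : (2:F) * k₁.eval 0 = 0 := by linear_combination e
        exact (mul_eq_zero.mp h20).resolve_left h2
      obtain ⟨k, hk⟩ := (dvd_iff_isRoot).mpr hk₁0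
      rw [map_zero, sub_zero] at hk
      exact ⟨k, by rw [hk₁, hk]; ring⟩
    · have d1 : (X - C γ) ∣ h := (dvd_iff_isRoot).mpr hr
      have d2 : (X + C γ) ∣ h := by
        have hroot : h.IsRoot (-γ) := by unfold IsRoot; rw [herm_eval_neg hh]; exact hr
        have := (dvd_iff_isRoot).mpr hroot
        rwa [map_neg, sub_neg_eq_add] at this
      have hco : IsCoprime (X - C γ : F[X]) (X + C γ) := by
        refine ⟨-C (2*γ)⁻¹, C (2*γ)⁻¹, ?_⟩
        have h2γ : (2*γ : F) ≠ 0 := mul_ne_zero h2 hγ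
        have hCC : (C (2*γ)⁻¹ : F[X]) * C (2*γ) = 1 := by
          rw [← map_mul, inv_mul_cancel₀ h2γ, map_one]
        calc -C (2*γ)⁻¹ * (X - C γ) + C (2*γ)⁻¹ * (X + C γ)
            = C (2*γ)⁻¹ * C (2*γ) := by rw [map_mul, map_ofNat]; ring
          _ = 1 := hCC
      exact hco.mul_dvd d1 d2
  obtain ⟨k, hk⟩ := hdvd
  refine ⟨k, hk, ?_⟩
  have hc : ((X - C γ) * (X + C γ)) * pstar k = ((X - C γ) * (X + C γ)) * k := by
    conv_rhs => rw [← hk, ← hh, hk]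
    rw [pstar_mul, hq]
  exact mul_left_cancel₀ hqne hc

variable [IsAlgClosed F]

lemma exists_i : ∃ i : F, i ^ 2 = -1 := IsAlgClosed.exists_pow_nat_eq (-1) (n := 2) (by norm_num)

theorem normRoot (h2 : (2:F) ≠ 0) : ∀ (n : ℕ) (h : F[X]), h.natDegree ≤ n → pstar h = h →
    ∃ x, x * pstar x = h := by
  intro n
  induction n using Nat.strong_induction_on with
  | _ n IH =>
    intro h hdeg hh
    by_cases hd0 : h.natDegree = 0
    · obtain ⟨c, rfl⟩ := Polynomial.natDegree_eq_zero.mp hd0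
      obtain ⟨r, hr⟩ := IsAlgClosed.exists_pow_nat_eq c (n := 2) (by norm_num)
      exact ⟨C r, by rw [pstar_C, ← map_mul, ← sq, hr]⟩
    · have hne : h ≠ 0 := fun h0 => hd0 (by simp [h0])
      obtain ⟨γ, hγ⟩ := IsAlgClosed.exists_root h (by
        intro hcon
        exact hd0 (natDegree_eq_zero_iff_degree_le_zero.mpr (le_of_eq hcon)))
      obtain ⟨k, hk, hks⟩ := herm_factor h2 hh hγ
      have hkne : k ≠ 0 := by rintro rfl; simp at hk; exact hne hk
      have hdk : k.natDegree < n := by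
        have h1 : (X - C γ : F[X]) ≠ 0 := X_sub_C_ne_zero γ
        have h2' : (X + C γ : F[X]) ≠ 0 := by
          have := X_sub_C_ne_zero (-γ); rwa [map_neg, sub_neg_eq_add] at this
        have : h.natDegree = 2 + k.natDegree := by
          rw [hk, natDegree_mul (mul_ne_zero h1 h2') hkne, natDegree_mul h1 h2']
          have e1 : (X - C γ : F[X]).natDegree = 1 := natDegree_X_sub_C γ
          have e2 : (X + C γ : F[X]).natDegree = 1 := by
            have := natDegree_X_sub_C (-γ : F); rwa [map_neg, sub_neg_eq_add] at this
          omega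
        omega
      obtain ⟨x₂, hx₂⟩ := IH k.natDegree hdk k le_rfl hks
      obtain ⟨i, hi⟩ := exists_i (F := F)
      refine ⟨C i * (X - C γ) * x₂, ?_⟩
      have hCi : (C i : F[X]) * C i = -1 := by
        rw [← map_mul, ← sq, hi, map_neg, map_one]
      calc (C i * (X - C γ) * x₂) * pstar (C i * (X - C γ) * x₂)
          = (C i * C i) * ((X - C γ) * (-X - C γ)) * (x₂ * pstar x₂) := by
            simp only [pstar_mul, pstar_sub, pstar_X, pstar_C]; ring
        _ = (-1) * ((X - C γ) * (-X - C γ)) * k := by rw [hCi, hx₂]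
        _ = ((X - C γ) * (X + C γ)) * k := by ring
        _ = h := hk.symm

theorem normRoot' (h2 : (2:F) ≠ 0) {γ₀ : F} (hγ₀ : γ₀ ≠ 0) :
    ∀ (n : ℕ) (h : F[X]), h.natDegree ≤ n → pstar h = h → h ≠ 0 →
    ∃ x, x * pstar x = h ∧ x.eval (-γ₀) ≠ 0 := by
  intro n
  induction n using Nat.strong_induction_on with
  | _ n IH =>
    intro h hdeg hh hne
    by_cases he : h.eval (-γ₀) = 0
    · have hγ : h.eval γ₀ = 0 := by rw [← herm_eval_neg hh]; exact he
      obtain ⟨k, hk, hks⟩ := herm_factor h2 hh hγ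
      have h1 : (X - C γ₀ : F[X]) ≠ 0 := X_sub_C_ne_zero γ₀
      have h2' : (X + C γ₀ : F[X]) ≠ 0 := by
        have := X_sub_C_ne_zero (-γ₀); rwa [map_neg, sub_neg_eq_add] at this
      have hkne : k ≠ 0 := by rintro rfl; simp at hk; exact hne hk
      have hdk : k.natDegree < n := by
        have hnd : h.natDegree = 2 + k.natDegree := by
          rw [hk, natDegree_mul (mul_ne_zero h1 h2') hkne, natDegree_mul h1 h2']
          have e1 : (X - C γ₀ : F[X]).natDegree = 1 := natDegree_X_sub_C γ₀
          have e2 : (X + C γ₀ : F[X]).natDegree = 1 := by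
            have := natDegree_X_sub_C (-γ₀ : F); rwa [map_neg, sub_neg_eq_add] at this
          omega
        omega
      obtain ⟨x₂, hx₂, hx₂e⟩ := IH k.natDegree hdk k le_rfl hks hkne
      obtain ⟨i, hi⟩ := exists_i (F := F)
      have hine : i ≠ 0 := by
        intro h0; rw [h0] at hi; norm_num at hi
      refine ⟨C i * (X - C γ₀) * x₂, ?_, ?_⟩
      · have hCi : (C i : F[X]) * C i = -1 := by
          rw [← map_mul, ← sq, hi, map_neg, map_one]
        calc (C i * (X - C γ₀) * x₂) * pstar (C i * (X - C γ₀) * x₂)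
            = (C i * C i) * ((X - C γ₀) * (-X - C γ₀)) * (x₂ * pstar x₂) := by
              simp only [pstar_mul, pstar_sub, pstar_X, pstar_C]; ring
          _ = (-1) * ((X - C γ₀) * (-X - C γ₀)) * k := by rw [hCi, hx₂]
          _ = ((X - C γ₀) * (X + C γ₀)) * k := by ring
          _ = h := hk.symm
      · simp only [eval_mul, eval_C, eval_sub, eval_X]
        apply mul_ne_zero (mul_ne_zero hine ?_) hx₂e
        intro hcon
        have : (2:F) * γ₀ = 0 := by linear_combination -hcon
        exact (mul_ne_zero h2 hγ₀) this
    · obtain ⟨x, hx⟩ := normRoot h2 h.natDegree h le_rfl hh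
      refine ⟨x, hx, ?_⟩
      intro h0
      apply he
      have := congrArg (Polynomial.eval (-γ₀)) hx
      rw [eval_mul, h0, zero_mul] at this
      exact this.symm


lemma pstar_ne_zero {p : F[X]} (h : p ≠ 0) : pstar p ≠ 0 := fun hh => h (pstar_eq_zero.mp hh)

theorem baseRep (h2 : (2:F) ≠ 0) :
    ∀ (k : ℕ) (a b d : F[X]) (c : F), c ≠ 0 → pstar a = a → pstar d = d →
      a * d - b * pstar b = C c → a.natDegree ≤ k → Rep a b d := by
  intro k
  induction k using Nat.strong_induction_on with
  | _ k IH =>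
    intro a b d c hc ha hd hdet hak
    by_cases ha0 : a = 0
    · -- zero case
      subst ha0
      rw [zero_mul, zero_sub] at hdet
      have hbb : b * pstar b = C (-c) := by rw [map_neg]; linear_combination -hdet
      have hbne : b ≠ 0 := by
        intro h0; rw [h0, zero_mul] at hbb
        exact hc (by simpa using hbb.symm)
      have hdegb : b.natDegree = 0 := by
        have := natDegree_mul hbne (pstar_ne_zero hbne)
        rw [hbb, pstar_natDegree, natDegree_C] at this
        omega
      obtain ⟨b₀, hb₀⟩ := Polynomial.natDegree_eq_zero.mp hdegb
      have hb₀ne : b₀ ≠ 0 := by rintro rfl; simp at hb₀; exact hbne hb₀.symm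
      have h2b : (2 * b₀ : F) ≠ 0 := mul_ne_zero h2 hb₀ne
      refine ⟨C (2*b₀)⁻¹ * (1 - d), 1, ?_⟩
      have hkey : (C (2*b₀) : F[X]) * C (2*b₀)⁻¹ = 1 := by
        rw [← map_mul, mul_inv_cancel₀ h2b, map_one]
      simp only [val, pstar_mul, pstar_sub, pstar_one, pstar_C, hd, ← hb₀]
      have h2C : (C (2*b₀) : F[X]) = 2 * C b₀ := by rw [map_mul, map_ofNat]
      rw [h2C] at hkey
      linear_combination (1 - d) * hkey
    · by_cases hand : a.natDegree = 0
      · -- constant case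
        obtain ⟨a₀, ha₀⟩ := Polynomial.natDegree_eq_zero.mp hand
        have ha₀ne : a₀ ≠ 0 := by rintro rfl; simp at ha₀; exact ha0 ha₀.symm
        obtain ⟨r, hr⟩ := IsAlgClosed.exists_pow_nat_eq (a₀⁻¹) (n := 2) (by norm_num)
        refine ⟨C r, 0, ?_⟩
        have e1 : val a b d (C r) 0 = C r * (a * C r) := by simp [val]
        rw [e1, ← ha₀, ← map_mul, ← map_mul]
        have e2 : r * (a₀ * r) = 1 := by
          rw [← mul_assoc, mul_comm r a₀, mul_assoc, ← sq, hr, mul_inv_cancel₀ ha₀ne]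
        rw [e2, map_one]
      · -- main case
        have hk1 : 1 ≤ a.natDegree := Nat.one_le_iff_ne_zero.mpr hand
        have hlcne : a.leadingCoeff ≠ 0 := leadingCoeff_ne_zero.mpr ha0
        have hmon : (a * C a.leadingCoeff⁻¹).Monic := monic_mul_leadingCoeff_inv ha0
        obtain ⟨q, hq⟩ : ∃ q : F[X], q = -(C a.leadingCoeff⁻¹ * (b /ₘ (a * C a.leadingCoeff⁻¹))) :=
          ⟨_, rfl⟩
        obtain ⟨b₂, hb₂⟩ : ∃ b₂ : F[X], b₂ = b %ₘ (a * C a.leadingCoeff⁻¹) := ⟨_, rfl⟩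
        have hb₂eq : a * q + b = b₂ := by
          have hmd := modByMonic_add_div b (a * C a.leadingCoeff⁻¹)
          rw [hb₂, hq]; linear_combination -hmd
        obtain ⟨d₂, hd₂⟩ : ∃ d₂ : F[X], d₂ = pstar q * (a*q + b) + (pstar b * q + d) := ⟨_, rfl⟩
        have eA : tA 1 q 0 1 a b d = a := by simp [tA]
        have eB : tB 1 q 0 1 a b d = b₂ := by rw [← hb₂eq]; simp [tB]
        have eD : tD 1 q 0 1 a b d = d₂ := by rw [hd₂]; simp only [tD, pstar_one, pstar_zero]; ring
        have hd₂herm : pstar d₂ = d₂ := by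
          have := tD_herm (a := a) (b := b) (d := d) ha hd 1 q 0 1
          rw [eD] at this; exact this
        have hdet₂ : a * d₂ - b₂ * pstar b₂ = C c := by
          have hdt := det_trans (a := a) (b := b) (d := d) ha hd 1 q 0 1
          rw [eA, eB, eD] at hdt
          simp only [mul_one, zero_mul, mul_zero, sub_zero, one_mul, pstar_one] at hdt
          rw [hdt, hdet]
        have hb₂ne : b₂ ≠ 0 := by
          intro h0
          rw [h0, zero_mul, sub_zero] at hdet₂
          have hd₂ne : d₂ ≠ 0 := by
            intro h0p; rw [h0p, mul_zero] at hdet₂; exact hc (by simpa using hdet₂.symm)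
          have := natDegree_mul ha0 hd₂ne
          rw [hdet₂, natDegree_C] at this
          omega
        have hdegb₂ : b₂.natDegree < a.natDegree := by
          apply natDegree_lt_natDegree hb₂ne
          have h1 := degree_modByMonic_lt b hmon
          have h2p : (a * C a.leadingCoeff⁻¹).degree = a.degree :=
            degree_mul_leadingCoeff_inv a ha0
          rw [← hb₂, h2p] at h1
          exact h1
        have hd₂deg : d₂.natDegree < k := by
          by_cases hd₂0 : d₂ = 0
          · rw [hd₂0]; simp; omega
          · have he : a * d₂ = C c + b₂ * pstar b₂ := by linear_combination hdet₂
            have hnd : a.natDegree + d₂.natDegree = (C c + b₂ * pstar b₂).natDegree := by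
              rw [← natDegree_mul ha0 hd₂0, he]
            have hmul : (b₂ * pstar b₂).natDegree = 2 * b₂.natDegree := by
              rw [natDegree_mul hb₂ne (pstar_ne_zero hb₂ne), pstar_natDegree]; ring
            have hle : (C c + b₂ * pstar b₂).natDegree ≤ 2 * b₂.natDegree := by
              refine le_trans (natDegree_add_le _ _) ?_
              rw [natDegree_C, hmul]; omega
            omega
        have hdetsw : d₂ * a - pstar b₂ * pstar (pstar b₂) = C c := by
          rw [pstar_pstar]; linear_combination hdet₂
        obtain ⟨x, y, hxy⟩ := IH d₂.natDegree hd₂deg d₂ (pstar b₂) a c hc hd₂herm ha hdetsw le_rfl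
        have hswap : val a b₂ d₂ y x = 1 := by rw [← val_swap]; exact hxy
        refine ⟨1*y + q*x, 0*y + 1*x, ?_⟩
        have hvt := val_trans (a := a) (b := b) (d := d) ha hd 1 q 0 1 y x
        rw [eA, eB, eD] at hvt
        rw [← hvt]; exact hswap


theorem lemR (h2 : (2:F) ≠ 0) (γ : F) (μ p q : F[X]) (hμs : pstar μ = μ) (hμ0 : μ ≠ 0)
    (H0 : γ = 0 → (p.eval 0)^2 + μ.eval 0 * (q.eval 0)^2 ≠ 0)
    (H1 : γ ≠ 0 → (μ.eval γ ≠ 0 ∨ p.eval γ ≠ 0)) :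
    ∃ f g : F[X], f * pstar f + μ * (g * pstar g) = 1 ∧ (q * f - p * g).eval γ = 0 := by
  by_cases hq : q.eval γ = 0
  · exact ⟨1, 0, by simp, by simp [hq]⟩
  by_cases hγ : γ = 0
  · -- ramified case
    subst hγ
    have hm0 : (p.eval 0)^2 + μ.eval 0 * (q.eval 0)^2 ≠ 0 := H0 rfl
    obtain ⟨ρ, hρ2⟩ := IsAlgClosed.exists_pow_nat_eq (((p.eval 0)^2 + μ.eval 0 * (q.eval 0)^2)⁻¹)
      (n := 2) (by norm_num)
    have hm : ρ^2 * ((p.eval 0)^2 + μ.eval 0 * (q.eval 0)^2) = 1 := by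
      rw [hρ2]; exact inv_mul_cancel₀ hm0
    obtain ⟨hpoly, hhp⟩ : ∃ hp : F[X], hp = 1 - μ * (C (ρ*q.eval 0) * C (ρ*q.eval 0)) := ⟨_, rfl⟩
    have hherm : pstar hpoly = hpoly := by
      rw [hhp]; simp [hμs]
    obtain ⟨f₀, hf₀⟩ := normRoot h2 hpoly.natDegree hpoly le_rfl hherm
    have hev : f₀.eval 0 * f₀.eval 0 = (ρ*p.eval 0)^2 := by
      have e := congrArg (Polynomial.eval (0:F)) hf₀
      rw [eval_mul, pstar_eval, neg_zero, hhp] at e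
      simp only [eval_sub, eval_one, eval_mul, eval_C] at e
      rw [e]
      linear_combination -hm
    have hcase : f₀.eval 0 = ρ*p.eval 0 ∨ f₀.eval 0 = -(ρ*p.eval 0) := by
      have hz : (f₀.eval 0 - ρ*p.eval 0) * (f₀.eval 0 + ρ*p.eval 0) = 0 := by
        linear_combination hev
      rcases mul_eq_zero.mp hz with h | h
      · left; linear_combination h
      · right; linear_combination h
    obtain ⟨f, hfval, hfnorm⟩ : ∃ f : F[X], f.eval 0 = ρ*p.eval 0 ∧ f * pstar f = hpoly := by
      rcases hcase with h | h
      · exact ⟨f₀, h, hf₀⟩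
      · refine ⟨-f₀, by rw [eval_neg, h, neg_neg], ?_⟩
        rw [pstar_neg, neg_mul_neg, hf₀]
    refine ⟨f, C (ρ*q.eval 0), ?_, ?_⟩
    · rw [hfnorm, hhp]; simp only [pstar_C]; ring
    · simp only [eval_sub, eval_mul, eval_C, hfval]
      ring
  · -- unramified case
    have hqγ : q.eval γ ≠ 0 := hq
    -- get x₀
    have hμherm : pstar (-μ) = -μ := by rw [pstar_neg, hμs]
    obtain ⟨x₀, hx₀, hK⟩ : ∃ x₀ : F[X], x₀ * pstar x₀ = -μ ∧
        q.eval γ * μ.eval γ + p.eval γ * x₀.eval (-γ) ≠ 0 := by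
      by_cases hμγ : μ.eval γ = 0
      · have hp : p.eval γ ≠ 0 := (H1 hγ).resolve_left (by simpa using hμγ)
        obtain ⟨x₀, hx₀, hxe⟩ := normRoot' h2 hγ (-μ).natDegree (-μ) le_rfl hμherm
          (neg_ne_zero.mpr hμ0)
        exact ⟨x₀, hx₀, by rw [hμγ, mul_zero, zero_add]; exact mul_ne_zero hp hxe⟩
      · obtain ⟨x₁, hx₁⟩ := normRoot h2 (-μ).natDegree (-μ) le_rfl hμherm
        by_cases hK1 : q.eval γ * μ.eval γ + p.eval γ * x₁.eval (-γ) ≠ 0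
        · exact ⟨x₁, hx₁, hK1⟩
        · push_neg at hK1
          refine ⟨-x₁, by rw [pstar_neg, neg_mul_neg, hx₁], ?_⟩
          rw [eval_neg]
          intro hcon
          have : (2:F) * (q.eval γ * μ.eval γ) = 0 := by linear_combination hK1 + hcon
          rcases mul_eq_zero.mp this with h | h
          · exact h2 h
          · exact (mul_ne_zero hqγ hμγ) h
    obtain ⟨K, hKdef⟩ : ∃ K : F, K = q.eval γ * μ.eval γ + p.eval γ * x₀.eval (-γ) := ⟨_, rfl⟩
    have hKne : K ≠ 0 := by rw [hKdef]; exact hK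
    obtain ⟨lam, hlam⟩ : ∃ lam : F[X], lam = C (q.eval γ / K * γ⁻¹) * X := ⟨_, rfl⟩
    have hlamstar : pstar lam = -lam := by rw [hlam]; simp
    have hlamev : lam.eval γ = q.eval γ / K := by
      rw [hlam]; simp [eval_mul, eval_C]
      field_simp
      try ring
    refine ⟨1 - lam * μ, lam * pstar x₀, ?_, ?_⟩
    · have hpf : pstar (1 - lam*μ) = 1 + lam*μ := by
        rw [pstar_sub, pstar_one, pstar_mul, hlamstar, hμs]; ring
      have hpg : pstar (lam * pstar x₀) = -lam * x₀ := by
        rw [pstar_mul, hlamstar, pstar_pstar]; try ring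
      rw [hpf, hpg]
      linear_combination (-(μ * lam^2)) * hx₀
    · simp only [eval_sub, eval_mul, eval_one, hlamev, pstar_eval]
      rw [hKdef]
      field_simp
      try ring

noncomputable def tC (s₁ s₂ s₃ s₄ a b d : F[X]) : F[X] :=
  pstar s₂ * (a * s₁ + b * s₃) + pstar s₄ * (pstar b * s₁ + d * s₃)

lemma tC_eq (ha : pstar a = a) (hd : pstar d = d) (s₁ s₂ s₃ s₄ : F[X]) :
    tC s₁ s₂ s₃ s₄ a b d = pstar (tB s₁ s₂ s₃ s₄ a b d) := by
  simp only [tB, tC, pstar_add, pstar_mul, pstar_pstar, ha, hd]; ring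

lemma gcd1_eval {a b d : F[X]} (hg : Gcd1 a b d) (γ : F)
    (h1 : a.eval γ = 0) (hb : b.eval γ = 0) (h3 : (pstar b).eval γ = 0)
    (h4 : d.eval γ = 0) : False := by
  have hsub : ({a, b, pstar b, d} : Set F[X]) ⊆ ↑(RingHom.ker (Polynomial.evalRingHom γ)) := by
    intro x hx
    rcases hx with rfl | rfl | rfl | rfl <;>
      simp only [SetLike.mem_coe, RingHom.mem_ker, coe_evalRingHom] <;> assumption
  have hle : Ideal.span ({a, b, pstar b, d} : Set F[X]) ≤ RingHom.ker (Polynomial.evalRingHom γ) :=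
    Ideal.span_le.mpr hsub
  rw [hg] at hle
  have h1' : (1 : F[X]) ∈ RingHom.ker (Polynomial.evalRingHom γ) := hle Submodule.mem_top
  rw [RingHom.mem_ker] at h1'
  simp at h1'

theorem assembleTriple (ha : pstar a = a) (hd : pstar d = d) (hrep : Rep a b d) :
    ∃ σ₁ σ₂ σ₃ σ₄ : F[X], σ₁*σ₄ - σ₂*σ₃ = 1 ∧
      tA σ₁ σ₂ σ₃ σ₄ a b d = 1 ∧ tB σ₁ σ₂ σ₃ σ₄ a b d = 0 ∧
      tD σ₁ σ₂ σ₃ σ₄ a b d = a*d - b*pstar b := by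
  obtain ⟨x, y, hxy⟩ := hrep
  obtain ⟨u, hu⟩ : ∃ u : F[X], u = -pstar (pstar b * x + d*y) := ⟨_, rfl⟩
  obtain ⟨w, hw⟩ : ∃ w : F[X], w = pstar (a*x + b*y) := ⟨_, rfl⟩
  have hdet0 : x*w - y*u = 1 := by
    have h := congrArg pstar hxy
    rw [pstar_one] at h
    rw [hu, hw, ← h]
    simp only [val, pstar_add, pstar_mul, pstar_pstar]; ring
  have e0 : tA x u y w a b d = 1 := by
    rw [show tA x u y w a b d = val a b d x y from by simp only [tA, val], hxy]
  obtain ⟨β, hβ⟩ : ∃ β : F[X], β = tB x u y w a b d := ⟨_, rfl⟩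
  have thisA := tA_comp (a := a) (b := b) (d := d) ha hd x u y w 1 (-β) 0 1
  have thisB := tB_comp (a := a) (b := b) (d := d) ha hd x u y w 1 (-β) 0 1
  simp only [mul_one, mul_zero, zero_add, add_zero] at thisA thisB
  have cA1 : tA x (x*(-β) + u) y (y*(-β) + w) a b d = 1 := by
    rw [← thisA, e0, ← hβ]
    simp [tA]
  have cB0 : tB x (x*(-β) + u) y (y*(-β) + w) a b d = 0 := by
    rw [← thisB, e0, ← hβ]
    simp only [tB, pstar_one, pstar_zero, one_mul, zero_mul, mul_zero, add_zero, zero_add, mul_one]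
    ring
  have hds : x*(y*(-β) + w) - (x*(-β) + u)*y = 1 := by linear_combination hdet0
  have hdtσ := det_trans (a := a) (b := b) (d := d) ha hd x (x*(-β)+u) y (y*(-β)+w)
  rw [cA1, cB0, hds] at hdtσ
  simp only [pstar_one, pstar_zero, one_mul, mul_zero, zero_mul, sub_zero, mul_one] at hdtσ
  exact ⟨x, x*(-β) + u, y, y*(-β) + w, hds, cA1, cB0, hdtσ⟩


lemma det_herm (ha : pstar a = a) (hd : pstar d = d) :
    pstar (a*d - b*pstar b) = a*d - b*pstar b := by
  simp only [pstar_sub, pstar_mul, pstar_pstar, ha, hd]; ring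

theorem mainRep (h2 : (2:F) ≠ 0) :
    ∀ (n : ℕ) (a b d : F[X]), pstar a = a → pstar d = d →
      a*d - b*pstar b ≠ 0 → (a*d - b*pstar b).natDegree ≤ n → Gcd1 a b d → Rep a b d := by
  intro n
  induction n using Nat.strong_induction_on with
  | _ n IH =>
  intro a b d ha hd hD hDn hg
  by_cases hD0 : (a*d - b*pstar b).natDegree = 0
  · obtain ⟨c, hc⟩ := Polynomial.natDegree_eq_zero.mp hD0
    have hcne : c ≠ 0 := by rintro rfl; rw [map_zero] at hc; exact hD hc.symm
    exact baseRep h2 a.natDegree a b d c hcne ha hd hc.symm le_rfl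
  · obtain ⟨γ, hγroot⟩ := IsAlgClosed.exists_root (a*d - b*pstar b)
      (fun hcon => hD0 (natDegree_eq_zero_iff_degree_le_zero.mpr (le_of_eq hcon)))
    have hγeval : a.eval γ * d.eval γ - b.eval γ * (pstar b).eval γ = 0 := by
      have h := hγroot
      unfold IsRoot at h
      simpa [eval_sub, eval_mul] using h
    obtain ⟨v₁, v₂, hvne, k1, k2⟩ :
        ∃ v₁ v₂ : F, ¬(v₁ = 0 ∧ v₂ = 0) ∧
          a.eval γ * v₁ + b.eval γ * v₂ = 0 ∧ (pstar b).eval γ * v₁ + d.eval γ * v₂ = 0 := by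
      by_cases hab : a.eval γ = 0 ∧ b.eval γ = 0
      · by_cases hdb : d.eval γ = 0 ∧ (pstar b).eval γ = 0
        · exact absurd (gcd1_eval hg γ hab.1 hab.2 hdb.2 hdb.1) not_false
        · refine ⟨d.eval γ, -((pstar b).eval γ), ?_, ?_, by ring⟩
          · rintro ⟨hh1, hh2⟩; exact hdb ⟨hh1, by simpa using hh2⟩
          · rw [hab.1, hab.2]; ring
      · refine ⟨b.eval γ, -(a.eval γ), ?_, by ring, by linear_combination -hγeval⟩
        rintro ⟨hh1, hh2⟩; exact hab ⟨by simpa using hh2, hh1⟩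
    obtain ⟨c₂, c₄, hdetc⟩ : ∃ c₂ c₄ : F, v₁ * c₄ - c₂ * v₂ = 1 := by
      by_cases h1 : v₁ = 0
      · have h2v : v₂ ≠ 0 := fun h => hvne ⟨h1, h⟩
        exact ⟨-v₂⁻¹, 0, by rw [h1]; field_simp; ring⟩
      · exact ⟨0, v₁⁻¹, by field_simp; ring⟩
    obtain ⟨a₁, hae⟩ : ∃ z, z = tA (C v₁) (C c₂) (C v₂) (C c₄) a b d := ⟨_, rfl⟩
    obtain ⟨b₁, hbe⟩ : ∃ z, z = tB (C v₁) (C c₂) (C v₂) (C c₄) a b d := ⟨_, rfl⟩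
    obtain ⟨d₁, hde⟩ : ∃ z, z = tD (C v₁) (C c₂) (C v₂) (C c₄) a b d := ⟨_, rfl⟩
    have ha₁ : pstar a₁ = a₁ := by rw [hae]; exact tA_herm ha hd _ _ _ _
    have hd₁ : pstar d₁ = d₁ := by rw [hde]; exact tD_herm ha hd _ _ _ _
    have hcs : (C v₁ * C c₄ - C c₂ * C v₂ : F[X]) = 1 := by
      rw [← map_mul, ← map_mul, ← map_sub, hdetc, map_one]
    have hdet₁ : a₁*d₁ - b₁*pstar b₁ = a*d - b*pstar b := by
      rw [hae, hbe, hde]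
      rw [det_trans ha hd, hcs, pstar_one, one_mul, one_mul]
    have hg₁ : Gcd1 a₁ b₁ d₁ := by
      rw [hae, hbe, hde]
      refine gcd1_trans ha hd _ _ _ _ (C c₄) (-C c₂) (-C v₂) (C v₁) ?_ ?_ ?_ ?_ hg
      · rw [mul_neg, ← map_mul, ← map_mul, ← map_neg, ← map_add,
          show v₁*c₄ + -(c₂*v₂) = 1 by linear_combination hdetc, map_one]
      · ring
      · ring
      · rw [mul_neg, ← map_mul, ← map_mul, ← map_neg, ← map_add]
        rw [show -(v₂*c₂) + c₄*v₁ = (1:F) from by linear_combination hdetc, map_one]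
    have ea₁γ : a₁.eval γ = 0 := by
      rw [hae]
      simp only [tA, eval_add, eval_mul, pstar_C, eval_C]
      linear_combination v₁*k1 + v₂*k2
    have epb₁γ : (pstar b₁).eval γ = 0 := by
      rw [hbe, ← tC_eq ha hd]
      simp only [tC, eval_add, eval_mul, pstar_C, eval_C]
      linear_combination c₂*k1 + c₄*k2
    obtain ⟨k, hkeq, hks⟩ := herm_factor h2 ha₁ ea₁γ
    obtain ⟨a', ha'e⟩ : ∃ z : F[X], z = -k := ⟨_, rfl⟩
    have ha'h : pstar a' = a' := by rw [ha'e, pstar_neg, hks]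
    have ea₁ : a₁ = pstar (X - C γ) * (X - C γ) * a' := by
      rw [hkeq, ha'e]
      simp only [pstar_sub, pstar_X, pstar_C]; ring
    have hb₁root : b₁.eval (-γ) = 0 := by rw [← pstar_eval]; exact epb₁γ
    obtain ⟨k₂, hk₂⟩ : (X + C γ) ∣ b₁ := by
      have hb := (dvd_iff_isRoot).mpr hb₁root
      rwa [map_neg, sub_neg_eq_add] at hb
    obtain ⟨b', hb'e⟩ : ∃ z : F[X], z = -k₂ := ⟨_, rfl⟩
    have eb₁ : b₁ = pstar (X - C γ) * b' := by
      rw [hk₂, hb'e]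
      simp only [pstar_sub, pstar_X, pstar_C]; ring
    obtain ⟨μ, hμdef⟩ : ∃ z : F[X], z = a' * d₁ - b' * pstar b' := ⟨_, rfl⟩
    have hμs : pstar μ = μ := by
      rw [hμdef]
      simp only [pstar_sub, pstar_mul, pstar_pstar, ha'h, hd₁]; ring
    have hDfac : a*d - b*pstar b = (pstar (X - C γ) * (X - C γ)) * μ := by
      rw [← hdet₁, ea₁, eb₁, hμdef]
      simp only [pstar_mul, pstar_pstar]
      ring
    have hπne : (X - C γ : F[X]) ≠ 0 := X_sub_C_ne_zero γ
    have hππne : (pstar (X - C γ) * (X - C γ) : F[X]) ≠ 0 :=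
      mul_ne_zero (pstar_ne_zero hπne) hπne
    have hμne : μ ≠ 0 := by
      intro h0; rw [h0, mul_zero] at hDfac; exact hD hDfac
    have hππdeg : (pstar (X - C γ) * (X - C γ) : F[X]).natDegree = 2 := by
      have e : (pstar (X - C γ) * (X - C γ) : F[X]) = -(X^2 - C (γ^2)) := by
        simp only [pstar_sub, pstar_X, pstar_C, map_pow]; ring
      rw [e, natDegree_neg, natDegree_X_pow_sub_C]
    have hdegμ : μ.natDegree < n := by
      have e := hDfac
      have hnd : (a*d - b*pstar b).natDegree = 2 + μ.natDegree := by
        rw [e, natDegree_mul hππne hμne, hππdeg]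
      omega
    have hg' : Gcd1 a' b' d₁ := by
      unfold Gcd1
      rw [eq_top_iff, ← hg₁]
      apply Ideal.span_le.mpr
      intro x hx
      rcases hx with rfl | rfl | rfl | rfl
      · rw [ea₁]
        exact Ideal.mul_mem_left _ _ (Ideal.subset_span (by simp))
      · rw [eb₁]
        exact Ideal.mul_mem_left _ _ (Ideal.subset_span (by simp))
      · have : pstar b₁ = (X - C γ) * pstar b' := by
          rw [eb₁, pstar_mul, pstar_pstar]
        rw [this]
        exact Ideal.mul_mem_left _ _ (Ideal.subset_span (by simp))
      · exact Ideal.subset_span (by simp)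
    have hrep' : Rep a' b' d₁ := by
      refine IH μ.natDegree hdegμ a' b' d₁ ha'h hd₁ ?_ ?_ hg'
      · rw [← hμdef]; exact hμne
      · rw [← hμdef]
    obtain ⟨σ₁, σ₂, σ₃, σ₄, hσdet, hσA, hσB, hσD⟩ := assembleTriple ha'h hd₁ hrep'
    have hσD' : tD σ₁ σ₂ σ₃ σ₄ a' b' d₁ = μ := by rw [hσD]; exact hμdef.symm
    have E1 : σ₁*σ₄ + σ₂*(-σ₃) = 1 := by linear_combination hσdet
    have E2 : σ₁*(-σ₂) + σ₂*σ₁ = 0 := by ring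
    have E3 : σ₃*σ₄ + σ₄*(-σ₃) = 0 := by ring
    have E4 : σ₃*(-σ₂) + σ₄*σ₁ = 1 := by linear_combination hσdet
    have eM0 : tA σ₄ (-σ₂) (-σ₃) σ₁ 1 0 μ = a' := by
      conv_lhs => rw [← hσD', ← hσB, ← hσA]
      rw [tA_comp ha'h hd₁, E1, E2, E3, E4, tA_id]
    have eM1 : tB σ₄ (-σ₂) (-σ₃) σ₁ 1 0 μ = b' := by
      conv_lhs => rw [← hσD', ← hσB, ← hσA]
      rw [tB_comp ha'h hd₁, E1, E2, E3, E4, tB_id]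
    have eM2 : tD σ₄ (-σ₂) (-σ₃) σ₁ 1 0 μ = d₁ := by
      conv_lhs => rw [← hσD', ← hσB, ← hσA]
      rw [tD_comp ha'h hd₁, E1, E2, E3, E4, tD_id]
    -- evaluation formulas for b' and d₁ in terms of σ's
    have hb'eval : ∀ t : F, b'.eval t
        = σ₄.eval (-t) * (-σ₂.eval t) + (-σ₃.eval (-t)) * (μ.eval t * σ₁.eval t) := by
      intro t
      rw [← eM1]
      simp only [tB, eval_add, eval_mul, eval_neg, eval_one, eval_zero, pstar_eval,
        pstar_neg, pstar_zero, one_mul, zero_mul, mul_zero, add_zero, zero_add]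
    have hd₁eval : ∀ t : F, d₁.eval t
        = (-σ₂.eval (-t)) * (-σ₂.eval t) + σ₁.eval (-t) * (μ.eval t * σ₁.eval t) := by
      intro t
      rw [← eM2]
      simp only [tD, eval_add, eval_mul, eval_neg, eval_one, eval_zero, pstar_eval,
        pstar_neg, pstar_zero, one_mul, zero_mul, mul_zero, add_zero, zero_add]
    -- lemR
    obtain ⟨f, g, hval, hroot⟩ := lemR h2 γ μ (-σ₂) σ₁ hμs hμne
      (by
        intro hγ0
        intro hcon
        apply gcd1_eval hg₁ γ ea₁γ ?_ epb₁γ ?_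
        · rw [eb₁, eval_mul, pstar_eval, hγ0]
          simp
        · rw [hd₁eval γ, hγ0]
          simp only [eval_neg, neg_zero] at hcon ⊢
          linear_combination hcon)
      (by
        intro hγ0
        by_contra hcon
        push_neg at hcon
        obtain ⟨hμγ, hσ₂γ⟩ := hcon
        simp only [eval_neg, neg_eq_zero, not_not] at hσ₂γ
        apply gcd1_eval hg₁ γ ea₁γ ?_ epb₁γ ?_
        · rw [eb₁, eval_mul]
          rw [hb'eval γ, hσ₂γ, hμγ]
          ring
        · rw [hd₁eval γ, hσ₂γ, hμγ]
          ring)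
    obtain ⟨k₃, hk₃⟩ : (X - C γ) ∣ (σ₁ * f - -σ₂ * g) := (dvd_iff_isRoot).mpr hroot
    -- final assembly of the representing vector for (a₁,b₁,d₁)
    have hTA : tA (X - C γ) 0 0 1 a' b' d₁ = a₁ := by
      rw [ea₁]
      simp only [tA, pstar_zero, zero_mul, mul_zero, add_zero, zero_add, mul_one]
      ring
    have hTB : tB (X - C γ) 0 0 1 a' b' d₁ = b₁ := by
      rw [eb₁]
      simp only [tB, pstar_zero, zero_mul, mul_zero, add_zero, zero_add, mul_one, one_mul]
    have hTD : tD (X - C γ) 0 0 1 a' b' d₁ = d₁ := by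
      simp only [tD, pstar_zero, pstar_one, zero_mul, mul_zero, add_zero, zero_add, mul_one, one_mul]
    have v1 := val_trans (a := a') (b := b') (d := d₁) ha'h hd₁ (X - C γ) 0 0 1 k₃ (σ₃*f + σ₄*g)
    rw [hTA, hTB, hTD] at v1
    have v2 := val_trans (a := (1:F[X])) (b := 0) (d := μ) pstar_one hμs σ₄ (-σ₂) (-σ₃) σ₁
      ((X - C γ)*k₃ + 0*(σ₃*f + σ₄*g)) (0*k₃ + 1*(σ₃*f + σ₄*g))
    rw [eM0, eM1, eM2] at v2
    have cf : σ₄*((X - C γ)*k₃ + 0*(σ₃*f + σ₄*g)) + (-σ₂)*(0*k₃ + 1*(σ₃*f + σ₄*g)) = f := by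
      linear_combination (-σ₄) * hk₃ + f * hσdet
    have cg : (-σ₃)*((X - C γ)*k₃ + 0*(σ₃*f + σ₄*g)) + σ₁*(0*k₃ + 1*(σ₃*f + σ₄*g)) = g := by
      linear_combination (σ₃) * hk₃ + g * hσdet
    rw [cf, cg] at v2
    have vfin : val a₁ b₁ d₁ k₃ (σ₃*f + σ₄*g) = 1 := by
      rw [v1, v2]
      simp only [val, pstar_zero, zero_mul, mul_zero, add_zero, zero_add]
      linear_combination hval
    -- transfer back to (a,b,d)
    refine ⟨C v₁ * k₃ + C c₂ * (σ₃*f + σ₄*g), C v₂ * k₃ + C c₄ * (σ₃*f + σ₄*g), ?_⟩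
    have v0 := val_trans (a := a) (b := b) (d := d) ha hd (C v₁) (C c₂) (C v₂) (C c₄)
      k₃ (σ₃*f + σ₄*g)
    rw [← hae, ← hbe, ← hde] at v0
    rw [← v0]
    exact vfin
end Herm

/-- A `2×2` hermitian matrix `A` over `F[t]` with `det A ≠ 0` whose entries
generate the unit ideal is congruent to `diag(1, det A)`. -/
theorem hermitian_two_by_two_congruent_diag {F : Type*} [Field F]
    [IsAlgClosed F] (h2 : (2 : F) ≠ 0)
    (A : Matrix (Fin 2) (Fin 2) F[X]) (hA : mstar A = A)
    (hdet : A.det ≠ 0)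
    (hgcd : Ideal.span (Set.range fun p : Fin 2 × Fin 2 => A p.1 p.2) = ⊤) :
    PolyCongruent A (Matrix.diagonal ![1, A.det]) := by
  have e00 : pstar (A 0 0) = A 0 0 := by
    have := congrFun (congrFun hA 0) 0; simpa [mstar] using this
  have e11 : pstar (A 1 1) = A 1 1 := by
    have := congrFun (congrFun hA 1) 1; simpa [mstar] using this
  have e10 : A 1 0 = pstar (A 0 1) := by
    have := congrFun (congrFun hA 1) 0
    simp only [mstar, Matrix.of_apply] at this
    exact this.symm
  have hdet2 : A.det = A 0 0 * A 1 1 - A 0 1 * pstar (A 0 1) := by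
    rw [Matrix.det_fin_two, e10]
  have hg : Herm.Gcd1 (A 0 0) (A 0 1) (A 1 1) := by
    unfold Herm.Gcd1
    rw [eq_top_iff, ← hgcd]
    apply Ideal.span_le.mpr
    rintro x ⟨p, rfl⟩
    apply Ideal.subset_span
    fin_cases p
    · simp
    · simp
    · show A 1 0 ∈ _
      rw [e10]; simp
    · simp
  have hdne : A 0 0 * A 1 1 - A 0 1 * pstar (A 0 1) ≠ 0 := by rw [← hdet2]; exact hdet
  have hrep := Herm.mainRep h2 (A 0 0 * A 1 1 - A 0 1 * pstar (A 0 1)).natDegree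
    (A 0 0) (A 0 1) (A 1 1) e00 e11 hdne le_rfl hg
  obtain ⟨σ₁, σ₂, σ₃, σ₄, hσdet, hσA, hσB, hσD⟩ := Herm.assembleTriple e00 e11 hrep
  refine ⟨!![σ₁, σ₂; σ₃, σ₄], ?_, ?_⟩
  · rw [Matrix.det_fin_two_of, hσdet]; exact isUnit_one
  · have hm : mstar !![σ₁, σ₂; σ₃, σ₄] = !![pstar σ₁, pstar σ₃; pstar σ₂, pstar σ₄] := by
      ext i j; fin_cases i <;> fin_cases j <;> simp [mstar]
    have hAeta : A = !![A 0 0, A 0 1; pstar (A 0 1), A 1 1] := by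
      conv_lhs => rw [Matrix.eta_fin_two A]
      rw [e10]
    rw [hm]
    conv_rhs => rw [hAeta]
    rw [Matrix.mul_fin_two, Matrix.mul_fin_two]
    have hσA' := hσA; have hσB' := hσB; have hσD' := hσD
    have hσC : Herm.tC σ₁ σ₂ σ₃ σ₄ (A 0 0) (A 0 1) (A 1 1) = 0 := by
      rw [Herm.tC_eq e00 e11, hσB, Herm.pstar_zero]
    simp only [Herm.tA] at hσA'
    simp only [Herm.tB] at hσB'
    simp only [Herm.tD] at hσD'
    simp only [Herm.tC] at hσC
    have hdiag : (Matrix.diagonal ![1, A.det] : Matrix (Fin 2) (Fin 2) F[X])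
        = !![1, 0; 0, A.det] := by
      ext i j; fin_cases i <;> fin_cases j <;> simp [Matrix.diagonal]
    rw [hdiag, hdet2]
    refine Matrix.ext fun i j => ?_
    fin_cases i <;> fin_cases j <;>
      simp only [Fin.mk_zero, Fin.mk_one, Fin.isValue, Matrix.cons_val', Matrix.cons_val_zero,
        Matrix.cons_val_one, Matrix.head_cons, Matrix.head_fin_const, Matrix.empty_val',
        Matrix.cons_val_fin_one, Matrix.of_apply]
    · linear_combination -hσA'
    · linear_combination -hσB'
    · linear_combination -hσC
    · linear_combination -hσD'
end

section
/- Let a, b ∈ F[t] satisfy gcd(a, b) = 1 and gcd(b, b*) = 1. Then there exist x, y ∈ F[t], with x even (i.e., x* = x), such that a x + b y = 1. -/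
open Polynomial

/-- `A` and `B` are congruent if `B = S* A S` for some `S ∈ GL_n(F[t])`. -/
def MatCongruent {F : Type*} [Field F] {n : ℕ}
    (A B : Matrix (Fin n) (Fin n) F[X]) : Prop :=
  ∃ S : Matrix (Fin n) (Fin n) F[X], IsUnit S.det ∧ B = mstar S * A * S

lemma pstar_mul' {F : Type*} [Field F] (p q : F[X]) :
    pstar (p * q) = pstar p * pstar q := by simp [pstar]

lemma pstar_add' {F : Type*} [Field F] (p q : F[X]) :
    pstar (p + q) = pstar p + pstar q := by simp [pstar]

lemma pstar_sub' {F : Type*} [Field F] (p q : F[X]) :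
    pstar (p - q) = pstar p - pstar q := by simp [pstar]

lemma pstar_one' {F : Type*} [Field F] : pstar (1 : F[X]) = 1 := by simp [pstar]

lemma pstar_C' {F : Type*} [Field F] (c : F) : pstar (C c) = C c := by simp [pstar]

lemma pstar_pstar' {F : Type*} [Field F] (p : F[X]) : pstar (pstar p) = p := by
  simp [pstar, comp_assoc]

/-- If `gcd(a,b) = 1` and `gcd(b,b*) = 1` in `F[t]`, then `a x + b y = 1`
for some `x, y ∈ F[t]` with `x` even. -/
theorem exists_even_bezout {F : Type*} [Field F] [IsAlgClosed F]
    (h2 : (2 : F) ≠ 0) (a b : F[X])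
    (hab : IsCoprime a b) (hb : IsCoprime b (pstar b)) :
    ∃ x y : F[X], pstar x = x ∧ a * x + b * y = 1 := by
  obtain ⟨u, v, huv⟩ := hab
  have hbs := hb.symm
  obtain ⟨p, q, hpq⟩ := hb
  have hpq' : pstar p * pstar b + pstar q * b = 1 := by
    have := congrArg pstar hpq
    simpa [pstar_add', pstar_mul', pstar_pstar', pstar_one'] using this
  have hdvd : pstar b ∣ (p - pstar q) :=
    hbs.dvd_of_dvd_mul_right ⟨pstar p - q, by linear_combination hpq - hpq'⟩
  obtain ⟨g, hg⟩ := hdvd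
  have hpg : pstar p - q = b * pstar g := by
    have := congrArg pstar hg
    simp only [pstar_sub', pstar_mul', pstar_pstar'] at this
    linear_combination this
  set x := pstar u * (p * b) + u * (q * pstar b) with hxdef
  set e := a * pstar u * p - v * q * pstar b - p with hedef
  have hx1 : a * x = 1 + b * e := by
    rw [hxdef, hedef]
    linear_combination (q * pstar b) * huv + hpq
  have hpx : pstar x = u * (pstar p * pstar b) + pstar u * (pstar q * b) := by
    simp [hxdef, pstar_add', pstar_mul', pstar_pstar']
  set d := pstar u * g - u * pstar g with hddef
  have hx2 : x - pstar x = b * pstar b * d := by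
    rw [hxdef, hpx, hddef]
    linear_combination (b * pstar u) * hg - (u * pstar b) * hpg
  have h2c : (C (2⁻¹ : F)) * 2 = (1 : F[X]) := by
    rw [← map_ofNat (C : F →+* F[X]) 2, ← C_mul, inv_mul_cancel₀ h2, C_1]
  refine ⟨C (2⁻¹ : F) * (x + pstar x),
    -(C (2⁻¹ : F)) * (2 * e - a * pstar b * d), ?_, ?_⟩
  · simp only [pstar_mul', pstar_add', pstar_pstar', pstar_C']
    ring
  · linear_combination (2 * C (2⁻¹ : F)) * hx1 - (a * C (2⁻¹ : F)) * hx2 + h2c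
end

section
/- Let A ∈ M_2(F[t]) be skew-hermitian with det(A) ≠ 0 and gcd(A) = 1. Then A is congruent to a matrix both of whose diagonal entries are zero. -/
open Polynomial

namespace SkewAux

variable {F : Type*} [Field F]

lemma pstar_add (p q : F[X]) : pstar (p + q) = pstar p + pstar q := add_comp
lemma pstar_mul (p q : F[X]) : pstar (p * q) = pstar p * pstar q := mul_comp p q (-X)
lemma pstar_neg (p : F[X]) : pstar (-p) = -pstar p := neg_comp
lemma pstar_sub (p q : F[X]) : pstar (p - q) = pstar p - pstar q := sub_comp
lemma pstar_one : pstar (1 : F[X]) = 1 := one_comp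
lemma pstar_zero : pstar (0 : F[X]) = 0 := zero_comp
lemma pstar_C (κ : F) : pstar (C κ) = C κ := C_comp
lemma pstar_X : pstar (X : F[X]) = -X := X_comp

lemma pstar_pstar (p : F[X]) : pstar (pstar p) = p := by
  show (p.comp (-X)).comp (-X) = p
  rw [comp_assoc]
  simp

lemma pstar_eval (p : F[X]) (δ : F) : (pstar p).eval δ = p.eval (-δ) := by
  simp [pstar, eval_comp]

lemma pstar_ne_zero {p : F[X]} (hp : p ≠ 0) : pstar p ≠ 0 := by
  intro h
  apply hp
  have := congrArg pstar h
  rwa [pstar_pstar, pstar_zero] at this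

lemma pstar_dvd {p q : F[X]} (h : p ∣ q) : pstar p ∣ pstar q := by
  obtain ⟨r, rfl⟩ := h
  exact ⟨pstar r, pstar_mul p r⟩

/-- "no common root" -/
def NCR (p q : F[X]) : Prop := ∀ δ : F, p.eval δ = 0 → q.eval δ = 0 → False

lemma ncr_of_isCoprime {p q : F[X]} (h : IsCoprime p q) : NCR p q := by
  rintro δ hp hq
  obtain ⟨u, v, huv⟩ := h
  have := congrArg (Polynomial.eval δ) huv
  simp [hp, hq] at this

lemma isCoprime_of_ncr [IsAlgClosed F] {p q : F[X]} (hpq : p ≠ 0 ∨ q ≠ 0)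
    (h : NCR p q) : IsCoprime p q := by
  classical
  by_contra hcop
  set g := GCDMonoid.gcd p q with hg
  have hgu : ¬IsUnit g := fun hu => hcop ((gcd_isUnit_iff p q).1 hu)
  have hg0 : g ≠ 0 := by
    rcases hpq with hp | hq
    · exact gcd_ne_zero_of_left hp
    · exact gcd_ne_zero_of_right hq
  have hdeg : g.degree ≠ 0 := by
    intro hd
    exact hgu (isUnit_iff_degree_eq_zero.2 hd)
  obtain ⟨δ, hδ⟩ := IsAlgClosed.exists_root g hdeg
  exact h δ (eval_eq_zero_of_dvd_of_eval_eq_zero (gcd_dvd_left p q) hδ)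
    (eval_eq_zero_of_dvd_of_eval_eq_zero (gcd_dvd_right p q) hδ)

section parity

variable (h2 : (2 : F) ≠ 0)

include h2 in
lemma C_half_two : (C ((2:F)⁻¹)) * 2 = (1 : F[X]) := by
  have : ((2 : F[X])) = C (2 : F) := (map_ofNat (C : F →+* F[X]) 2).symm
  rw [this, ← C_mul, inv_mul_cancel₀ h2, C_1]

include h2 in
lemma odd_eval_zero {q : F[X]} (hq : pstar q = -q) : q.eval 0 = 0 := by
  have h := congrArg (Polynomial.eval 0) hq
  rw [pstar_eval, neg_zero, eval_neg] at h
  have : (2 : F) * q.eval 0 = 0 := by linear_combination h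
  rcases mul_eq_zero.1 this with h' | h'
  · exact absurd h' h2
  · exact h'

include h2 in
lemma odd_decomp {q : F[X]} (hq : pstar q = -q) :
    ∃ q1 : F[X], q = X * q1 ∧ pstar q1 = q1 := by
  have h0 : q.coeff 0 = 0 := by
    rw [coeff_zero_eq_eval_zero]; exact odd_eval_zero h2 hq
  obtain ⟨q1, hq1⟩ := (X_dvd_iff).2 h0
  refine ⟨q1, hq1, ?_⟩
  have : X * pstar q1 = X * q1 := by
    have h' : pstar q = -q := hq
    rw [hq1, pstar_mul, pstar_X] at h'
    have := h'
    -- -X * pstar q1 = -(X*q1)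
    have hX : (-X : F[X]) * pstar q1 = -(X * q1) := this
    linear_combination -hX
  exact mul_left_cancel₀ X_ne_zero this

include h2 in
lemma even_odd_decomp (p : F[X]) :
    ∃ p0 p1 : F[X], pstar p0 = p0 ∧ pstar p1 = p1 ∧ p = p0 + X * p1 := by
  set q := C ((2:F)⁻¹) * (p - pstar p) with hqdef
  have hq : pstar q = -q := by
    rw [hqdef, pstar_mul, pstar_C, pstar_sub, pstar_pstar]; ring
  obtain ⟨p1, hp1, hp1e⟩ := odd_decomp h2 hq
  set p0 := C ((2:F)⁻¹) * (p + pstar p) with hp0def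
  have hp0e : pstar p0 = p0 := by
    rw [hp0def, pstar_mul, pstar_C, pstar_add, pstar_pstar]; ring_nf
  refine ⟨p0, p1, hp0e, hp1e, ?_⟩
  have : p0 + q = p := by
    rw [hp0def, hqdef]
    have h := C_half_two h2
    linear_combination p * h
  rw [← hp1]
  linear_combination -this

end parity

end SkewAux

namespace SkewAux2

open SkewAux

variable {F : Type*} [Field F] [IsAlgClosed F]

lemma linear_pair_coprime {α : F} (h2 : (2:F) ≠ 0) (hα : α ≠ 0) :
    IsCoprime (X - C α) (X + C α : F[X]) := by
  refine ⟨-(C ((2*α)⁻¹)), C ((2*α)⁻¹), ?_⟩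
  have h1 : (-(C ((2*α)⁻¹))) * (X - C α) + (C ((2*α)⁻¹)) * (X + C α)
      = C ((2*α)⁻¹) * ((2:F[X]) * C α) := by ring
  rw [h1, show ((2:F[X])) = C (2:F) from (map_ofNat (C : F →+* F[X]) 2).symm,
    ← C_mul, ← C_mul, inv_mul_cancel₀ (mul_ne_zero h2 hα), C_1]

lemma X_add_C_eq {α : F} : (X + C α : F[X]) = X - C (-α) := by
  rw [map_neg]; ring

lemma X_add_C_ne_zero' {α : F} : (X + C α : F[X]) ≠ 0 := by
  rw [X_add_C_eq]; exact X_sub_C_ne_zero (-α)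

lemma pair_dvd {D : F[X]} (h2 : (2:F) ≠ 0) (hDe : pstar D = D) (hD0 : D ≠ 0)
    {α : F} (hα : α ≠ 0) (hroot : D.eval α = 0) :
    ∃ E : F[X], D = (X - C α) * (X + C α) * E ∧ pstar E = E ∧ E ≠ 0 ∧
      E.natDegree + 2 = D.natDegree := by
  have hroot2 : D.eval (-α) = 0 := by
    have := pstar_eval D α
    rw [hDe] at this
    rw [← this, hroot]
  have hd1 : (X - C α) ∣ D := dvd_iff_isRoot.2 hroot
  have hd2 : (X + C α) ∣ D := by
    rw [X_add_C_eq]; exact dvd_iff_isRoot.2 hroot2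
  obtain ⟨E, hE⟩ := (linear_pair_coprime h2 hα).mul_dvd hd1 hd2
  have hlin0 : (X - C α) * (X + C α) ≠ 0 :=
    mul_ne_zero (X_sub_C_ne_zero α) X_add_C_ne_zero'
  have hE0 : E ≠ 0 := by
    rintro rfl; rw [mul_zero] at hE; exact hD0 hE
  have hEe : pstar E = E := by
    have hps := congrArg pstar hE
    rw [hDe, pstar_mul, pstar_mul, pstar_sub, pstar_add, pstar_X, pstar_C] at hps
    have h' : (X - C α) * (X + C α) * pstar E = (X - C α) * (X + C α) * E := by
      linear_combination hE - hps
    exact mul_left_cancel₀ hlin0 h'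
  refine ⟨E, hE, hEe, hE0, ?_⟩
  have := congrArg natDegree hE
  rw [natDegree_mul hlin0 hE0, natDegree_mul (X_sub_C_ne_zero α) X_add_C_ne_zero',
    natDegree_X_sub_C, X_add_C_eq, natDegree_X_sub_C] at this
  omega

lemma exists_i : ∃ i : F, (C i) * (C i) = (-1 : F[X]) := by
  obtain ⟨i, hi⟩ := IsAlgClosed.exists_pow_nat_eq (-1 : F) (n := 2) (by norm_num)
  refine ⟨i, ?_⟩
  rw [← C_mul, ← sq, hi, map_neg, C_1]

lemma normhalf_aux (h2 : (2:F) ≠ 0) :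
    ∀ n : ℕ, ∀ D : F[X], D.natDegree ≤ n → D ≠ 0 → pstar D = D →
      ∃ z, z * pstar z = D := by
  intro n
  induction n with
  | zero =>
    intro D hdeg hD0 _
    obtain ⟨κ, rfl⟩ := natDegree_eq_zero.1 (Nat.le_zero.1 hdeg)
    obtain ⟨s, hs⟩ := IsAlgClosed.exists_pow_nat_eq κ (n := 2) (by norm_num)
    exact ⟨C s, by rw [pstar_C, ← C_mul, ← sq, hs]⟩
  | succ n ih =>
    intro D hdeg hD0 hDe
    by_cases hd0 : D.natDegree = 0
    · obtain ⟨κ, rfl⟩ := natDegree_eq_zero.1 hd0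
      obtain ⟨s, hs⟩ := IsAlgClosed.exists_pow_nat_eq κ (n := 2) (by norm_num)
      exact ⟨C s, by rw [pstar_C, ← C_mul, ← sq, hs]⟩
    · have hdegne : D.degree ≠ 0 := by
        rw [degree_eq_natDegree hD0]
        exact_mod_cast hd0
      obtain ⟨α, hα⟩ := IsAlgClosed.exists_root D hdegne
      obtain ⟨i, hCi⟩ := exists_i (F := F)
      by_cases hα0 : α = 0
      · -- D = X^2 * E
        subst hα0
        have h0 : D.coeff 0 = 0 := by
          rw [coeff_zero_eq_eval_zero]; exact hα
        obtain ⟨D', hD'⟩ := (X_dvd_iff).2 h0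
        have hD'0 : D' ≠ 0 := by rintro rfl; rw [mul_zero] at hD'; exact hD0 hD'
        have hD'odd : pstar D' = -D' := by
          have hps := congrArg pstar hD'
          rw [hDe, pstar_mul, pstar_X] at hps
          have h' : X * pstar D' = X * (-D') := by linear_combination hps - hD'
          exact mul_left_cancel₀ X_ne_zero h'
        obtain ⟨E, hEfact, hEe⟩ := odd_decomp h2 hD'odd
        have hE0 : E ≠ 0 := by
          rintro rfl; rw [mul_zero] at hEfact; exact hD'0 hEfact
        have hDeg2 : E.natDegree ≤ n := by
          have h1 := congrArg natDegree hD'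
          have h2' := congrArg natDegree hEfact
          rw [natDegree_mul X_ne_zero hD'0, natDegree_X] at h1
          rw [natDegree_mul X_ne_zero hE0, natDegree_X] at h2'
          omega
        obtain ⟨zE, hzE⟩ := ih E hDeg2 hE0 hEe
        refine ⟨C i * X * zE, ?_⟩
        rw [pstar_mul, pstar_mul, pstar_C, pstar_X, hD', hEfact]
        linear_combination (-(X*X*(zE * pstar zE))) * hCi + (X*X) * hzE
      · obtain ⟨E, hEfact, hEe, hE0, hEdeg⟩ := pair_dvd h2 hDe hD0 hα0 hα
        obtain ⟨zE, hzE⟩ := ih E (by omega) hE0 hEe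
        refine ⟨C i * (X - C α) * zE, ?_⟩
        rw [pstar_mul, pstar_mul, pstar_C, pstar_sub, pstar_X, pstar_C, hEfact]
        linear_combination (-((X - C α)*(X + C α)*(zE * pstar zE))) * hCi
          + ((X - C α)*(X + C α)) * hzE

lemma normhalf (h2 : (2:F) ≠ 0) {D : F[X]} (hD0 : D ≠ 0) (hDe : pstar D = D) :
    ∃ z, z * pstar z = D :=
  normhalf_aux h2 D.natDegree D le_rfl hD0 hDe

end SkewAux2

namespace SkewAux2

open SkewAux

variable {F : Type*} [Field F] [IsAlgClosed F]

lemma i_ne_zero {i : F} (hCi : (C i) * (C i) = (-1 : F[X])) : i ≠ 0 := by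
  intro h
  have h0 := congrArg (Polynomial.eval (0:F)) hCi
  have : (0:F) = -1 := by simpa [h] using h0
  norm_num at this

lemma lemW (h2 : (2:F) ≠ 0) :
    ∀ n : ℕ, ∀ g ch : F[X], g.natDegree ≤ n → g ≠ 0 → pstar g = g → g.eval 0 ≠ 0 →
      (∀ δ : F, ch.eval δ = 0 → ch.eval (-δ) = 0 → False) →
      ∃ w : F[X], w * pstar w = g ∧
        (∀ δ : F, w.eval δ = 0 → w.eval (-δ) = 0 → False) ∧
        (∀ δ : F, w.eval δ = 0 → ch.eval δ = 0 → False) := by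
  intro n
  induction n with
  | zero =>
    intro g ch hdeg hg0 _ hgz _
    obtain ⟨κ, rfl⟩ := natDegree_eq_zero.1 (Nat.le_zero.1 hdeg)
    obtain ⟨s, hs⟩ := IsAlgClosed.exists_pow_nat_eq κ (n := 2) (by norm_num)
    have hs0 : s ≠ 0 := by
      rintro rfl; simp at hs; rw [← hs] at hgz; simp at hgz
    exact ⟨C s, by rw [pstar_C, ← C_mul, ← sq, hs],
      fun δ h _ => hs0 (by simpa using h),
      fun δ h _ => hs0 (by simpa using h)⟩
  | succ n ih =>
    intro g ch hdeg hg0 hge hgz hch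
    by_cases hd0 : g.natDegree = 0
    · obtain ⟨κ, rfl⟩ := natDegree_eq_zero.1 hd0
      obtain ⟨s, hs⟩ := IsAlgClosed.exists_pow_nat_eq κ (n := 2) (by norm_num)
      have hs0 : s ≠ 0 := by
        rintro rfl; simp at hs; rw [← hs] at hgz; simp at hgz
      exact ⟨C s, by rw [pstar_C, ← C_mul, ← sq, hs],
        fun δ h _ => hs0 (by simpa using h),
        fun δ h _ => hs0 (by simpa using h)⟩
    · have hdegne : g.degree ≠ 0 := by
        rw [degree_eq_natDegree hg0]
        exact_mod_cast hd0
      obtain ⟨γ, hγ⟩ := IsAlgClosed.exists_root g hdegne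
      have hγ0 : γ ≠ 0 := by
        rintro rfl; exact hgz hγ
      obtain ⟨E, hEfact, hEe, hE0, hEdeg⟩ := pair_dvd h2 hge hg0 hγ0 hγ
      have hEz : E.eval 0 ≠ 0 := by
        intro h
        apply hgz
        rw [hEfact]
        simp [h]
      obtain ⟨w', hw'E, hw'w', hw'c⟩ := ih E ch (by omega) hE0 hEe hEz hch
      obtain ⟨i, hCi⟩ := exists_i (F := F)
      have hi0 : i ≠ 0 := i_ne_zero hCi
      obtain ⟨β, hβ0, hprod, hw'mβ, hchβ⟩ :
          ∃ β : F, β ≠ 0 ∧ (X - C β) * (X + C β) = (X - C γ) * (X + C γ) ∧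
            w'.eval (-β) ≠ 0 ∧ ch.eval β ≠ 0 := by
        by_cases hside : w'.eval (-γ) ≠ 0 ∧ ch.eval γ ≠ 0
        · exact ⟨γ, hγ0, rfl, hside.1, hside.2⟩
        · have hside' : w'.eval (-γ) = 0 ∨ ch.eval γ = 0 := by
            rcases not_and_or.1 hside with h | h
            · exact Or.inl (not_not.1 h)
            · exact Or.inr (not_not.1 h)
          refine ⟨-γ, neg_ne_zero.2 hγ0, by rw [map_neg]; ring, ?_, ?_⟩
          · rw [neg_neg]
            intro h
            rcases hside' with h' | h'
            · exact hw'w' γ h h'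
            · exact hw'c γ h h'
          · intro h
            rcases hside' with h' | h'
            · exact hw'c (-γ) h' h
            · exact hch γ h' h
      refine ⟨C i * (X - C β) * w', ?_, ?_, ?_⟩
      · rw [hEfact, ← hprod, pstar_mul, pstar_mul, pstar_C, pstar_sub, pstar_X, pstar_C]
        linear_combination (-((X - C β)*(X + C β)*(w' * pstar w'))) * hCi
          + ((X - C β)*(X + C β)) * hw'E
      · intro δ h1 h2'
        simp only [eval_mul, eval_sub, eval_C, eval_X, mul_eq_zero] at h1 h2'
        rcases h1 with (h1 | h1) | h1
        · exact hi0 (by simpa using h1)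
        · rcases h2' with (h2'' | h2'') | h2''
          · exact hi0 (by simpa using h2'')
          · -- δ = β and -δ = β
            have hδβ : δ = β := sub_eq_zero.1 h1
            have hδβ' : -δ = β := sub_eq_zero.1 h2''
            apply hβ0
            have : (2:F) * β = 0 := by linear_combination -hδβ - hδβ'
            rcases mul_eq_zero.1 this with h | h
            · exact absurd h h2
            · exact h
          · -- δ = β and w'(-δ) = 0
            have hδβ : δ = β := sub_eq_zero.1 h1
            rw [hδβ] at h2''
            exact hw'mβ h2''
        · rcases h2' with (h2'' | h2'') | h2''
          · exact hi0 (by simpa using h2'')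
          · -- w'(δ) = 0 and -δ = β, so δ = -β
            have hδβ : δ = -β := by linear_combination -h2''
            rw [hδβ] at h1
            exact hw'mβ h1
          · exact hw'w' δ h1 h2''
      · intro δ h1 hc
        simp only [eval_mul, eval_sub, eval_C, eval_X, mul_eq_zero] at h1
        rcases h1 with (h1 | h1) | h1
        · exact hi0 (by simpa using h1)
        · have hδβ : δ = β := sub_eq_zero.1 h1
          rw [hδβ] at hc
          exact hchβ hc
        · exact hw'c δ h1 hc

end SkewAux2

namespace SkewMat

open SkewAux

variable {F : Type*} [Field F]

noncomputable def pstarHom : F[X] →+* F[X] where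
  toFun := pstar
  map_one' := pstar_one
  map_mul' := pstar_mul
  map_zero' := pstar_zero
  map_add' := pstar_add

variable {n : ℕ}

lemma mstar_eq (M : Matrix (Fin n) (Fin n) F[X]) :
    mstar M = M.transpose.map (pstarHom (F := F)) := rfl

lemma mstar_apply (M : Matrix (Fin n) (Fin n) F[X]) (i j : Fin n) :
    mstar M i j = pstar (M j i) := rfl

lemma mstar_mul (M N : Matrix (Fin n) (Fin n) F[X]) :
    mstar (M * N) = mstar N * mstar M := by
  rw [mstar_eq, mstar_eq, mstar_eq, Matrix.transpose_mul, Matrix.map_mul]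

lemma mstar_mstar (M : Matrix (Fin n) (Fin n) F[X]) : mstar (mstar M) = M := by
  apply Matrix.ext
  intro i j
  show pstar (pstar (M i j)) = M i j
  exact pstar_pstar _

lemma mstar_one : mstar (1 : Matrix (Fin n) (Fin n) F[X]) = 1 := by
  rw [mstar_eq, Matrix.transpose_one, Matrix.map_one]
  · exact pstar_zero
  · exact pstar_one

lemma congruent_refl (A : Matrix (Fin n) (Fin n) F[X]) : MatCongruent A A :=
  ⟨1, by simp, by rw [mstar_one]; simp⟩

lemma congruent_trans {A B C : Matrix (Fin n) (Fin n) F[X]}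
    (h1 : MatCongruent A B) (h2 : MatCongruent B C) : MatCongruent A C := by
  obtain ⟨S, hS, rfl⟩ := h1
  obtain ⟨T, hT, rfl⟩ := h2
  refine ⟨S * T, by rw [Matrix.det_mul]; exact hS.mul hT, ?_⟩
  rw [mstar_mul]
  simp only [Matrix.mul_assoc]

lemma mstar_fin_two (a b c d : F[X]) :
    mstar !![a, b; c, d] = !![pstar a, pstar c; pstar b, pstar d] := by
  apply Matrix.ext
  intro i j
  rw [mstar_apply]
  fin_cases i <;> fin_cases j <;> simp

/-- no common zero of the four entries -/
def NCZ (A : Matrix (Fin 2) (Fin 2) F[X]) : Prop :=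
  ∀ δ : F, (A 0 0).eval δ = 0 → (A 0 1).eval δ = 0 → (A 1 0).eval δ = 0 →
    (A 1 1).eval δ = 0 → False

lemma ncz_of_span {A : Matrix (Fin 2) (Fin 2) F[X]}
    (hgcd : Ideal.span (Set.range fun p : Fin 2 × Fin 2 => A p.1 p.2) = ⊤) : NCZ A := by
  intro δ h00 h01 h10 h11
  have hsub : Ideal.span (Set.range fun p : Fin 2 × Fin 2 => A p.1 p.2) ≤
      RingHom.ker (Polynomial.evalRingHom δ) := by
    rw [Ideal.span_le]
    rintro x ⟨⟨i, j⟩, rfl⟩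
    fin_cases i <;> fin_cases j <;>
      simpa [RingHom.mem_ker, Polynomial.coe_evalRingHom]
  rw [hgcd] at hsub
  have h1 : (1 : F[X]) ∈ RingHom.ker (Polynomial.evalRingHom δ) := hsub trivial
  simp [RingHom.mem_ker] at h1

lemma entry_eval_zero (M N P : Matrix (Fin 2) (Fin 2) F[X]) (δ : F)
    (h : ∀ i j, (N i j).eval δ = 0) (i j : Fin 2) : ((M * N * P) i j).eval δ = 0 := by
  rw [Matrix.mul_apply, Polynomial.eval_finset_sum]
  apply Finset.sum_eq_zero
  intro l _
  rw [Polynomial.eval_mul, Matrix.mul_apply, Polynomial.eval_finset_sum]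
  apply mul_eq_zero_of_left
  apply Finset.sum_eq_zero
  intro k _
  rw [Polynomial.eval_mul, h k l, mul_zero]

lemma ncz_congruent {A B S : Matrix (Fin 2) (Fin 2) F[X]} (hS : IsUnit S.det)
    (hB : B = mstar S * A * S) (h : NCZ A) : NCZ B := by
  intro δ h00 h01 h10 h11
  have hinv : S * S⁻¹ = 1 := Matrix.mul_nonsing_inv S hS
  have h1 : mstar (S⁻¹) * mstar S = 1 := by rw [← mstar_mul, hinv, mstar_one]
  have hAeq : A = mstar (S⁻¹) * B * (S⁻¹) := by
    rw [hB, show mstar (S⁻¹) * (mstar S * A * S) * S⁻¹ =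
      (mstar (S⁻¹) * mstar S) * A * (S * S⁻¹) by simp only [Matrix.mul_assoc], h1, hinv,
      Matrix.one_mul, Matrix.mul_one]
  have hz : ∀ i j : Fin 2, (B i j).eval δ = 0 := by
    intro i j
    fin_cases i <;> fin_cases j
    · exact h00
    · exact h01
    · exact h10
    · exact h11
  refine h δ ?_ ?_ ?_ ?_ <;> rw [hAeq] <;> exact entry_eval_zero _ _ _ _ hz _ _

end SkewMat

namespace SkewMain

open SkewAux SkewAux2 SkewMat

variable {F : Type*} [Field F] [IsAlgClosed F]

lemma even_bezout (h2 : (2:F) ≠ 0) {p q : F[X]} (hpe : pstar p = p) (hqe : pstar q = q)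
    (h : IsCoprime p q) :
    ∃ π ρ : F[X], pstar π = π ∧ pstar ρ = ρ ∧ π * p + ρ * q = 1 := by
  obtain ⟨u, v, huv⟩ := h
  refine ⟨C ((2:F)⁻¹) * (u + pstar u), C ((2:F)⁻¹) * (v + pstar v), ?_, ?_, ?_⟩
  · rw [pstar_mul, pstar_C, pstar_add, pstar_pstar]; ring
  · rw [pstar_mul, pstar_C, pstar_add, pstar_pstar]; ring
  · have hs := congrArg pstar huv
    rw [pstar_add, pstar_mul, pstar_mul, pstar_one, hpe, hqe] at hs
    have hh := C_half_two h2
    linear_combination (C ((2:F)⁻¹)) * huv + (C ((2:F)⁻¹)) * hs + hh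

lemma pstar_decomp {p p0 p1 : F[X]} (h : p = p0 + X * p1) (h0 : pstar p0 = p0)
    (h1 : pstar p1 = p1) : pstar p = p0 - X * p1 := by
  rw [h, pstar_add, pstar_mul, pstar_X, h0, h1]; ring

lemma even_eval {p : F[X]} (h : pstar p = p) (δ : F) : p.eval (-δ) = p.eval δ := by
  rw [← pstar_eval, h]

lemma stepCD (h2 : (2:F) ≠ 0) (c dd : F[X]) (hdd : pstar dd = -dd)
    (hncz : NCZ !![0, c; -pstar c, dd]) :
    ∃ B : Matrix (Fin 2) (Fin 2) F[X],
      MatCongruent !![0, c; -pstar c, dd] B ∧ B 0 0 = 0 ∧ B 1 1 = 0 := by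
  classical
  set B1 : Matrix (Fin 2) (Fin 2) F[X] := !![0, c; -pstar c, dd] with hB1def
  have hB00 : B1 0 0 = 0 := by simp [hB1def]
  have hB01 : B1 0 1 = c := by simp [hB1def]
  have hB10 : B1 1 0 = -pstar c := by simp [hB1def]
  have hB11 : B1 1 1 = dd := by simp [hB1def]
  -- c(0) ≠ 0
  have hc0 : c.eval 0 ≠ 0 := by
    intro h
    refine hncz 0 ?_ ?_ ?_ ?_
    · rw [hB00]; simp
    · rw [hB01]; exact h
    · rw [hB10]; simp [pstar_eval, h]
    · rw [hB11]; exact odd_eval_zero h2 hdd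
  have hcne : c ≠ 0 := fun h => hc0 (by rw [h]; simp)
  have hpcne : pstar c ≠ 0 := pstar_ne_zero hcne
  -- gcd
  set g : F[X] := GCDMonoid.gcd c (pstar c) with hgdef
  have hd1 : g ∣ c := gcd_dvd_left c (pstar c)
  have hd2 : g ∣ pstar c := gcd_dvd_right c (pstar c)
  have hg0 : g ≠ 0 := gcd_ne_zero_of_left hcne
  obtain ⟨ch, hchdef⟩ := gcd_dvd_left c (pstar c)
  have hgz : g.eval 0 ≠ 0 := by
    intro h
    apply hc0
    rw [hchdef, eval_mul, h, zero_mul]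
  have hchz : ch.eval 0 ≠ 0 := by
    intro h
    apply hc0
    rw [hchdef, eval_mul, h, mul_zero]
  have hchne : ch ≠ 0 := fun h => hchz (by rw [h]; simp)
  -- pstar g = g
  have hge : pstar g = g := by
    have hdp : pstar g ∣ g := by
      refine dvd_gcd ?_ (pstar_dvd hd1)
      have := pstar_dvd hd2
      rwa [pstar_pstar] at this
    have hgd : g ∣ pstar g := by
      have := pstar_dvd hdp
      rwa [pstar_pstar] at this
    obtain ⟨u, hu⟩ := associated_of_dvd_dvd hgd hdp
    obtain ⟨κ, hκu, hκ⟩ := Polynomial.isUnit_iff.1 u.isUnit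
    have hust : pstar g = g * C κ := by rw [← hu, hκ]
    have hsq : C κ * C κ = (1 : F[X]) := by
      have h1 := congrArg pstar hust
      rw [pstar_pstar, pstar_mul, pstar_C, hust] at h1
      -- g = g * C κ * C κ
      have h2' : g * (C κ * C κ) = g * 1 := by
        rw [mul_one]; linear_combination -h1
      exact mul_left_cancel₀ hg0 h2'
    have hκsq : κ * κ = 1 := by
      have := congrArg (Polynomial.eval (0:F)) hsq
      simpa using this
    rcases mul_self_eq_one_iff.1 hκsq with h1 | h1
    · rw [hust, h1, map_one, mul_one]
    · exfalso
      apply hgz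
      apply odd_eval_zero h2
      rw [hust, h1]
      simp
  -- IsCoprime ch (pstar ch)
  have hchcop : IsCoprime ch (pstar ch) := by
    have h1 := isCoprime_div_gcd_div_gcd (p := c) (q := pstar c) hpcne
    rw [← hgdef] at h1
    have hc_div : c / g = ch := by
      rw [hchdef]; exact mul_div_cancel_left₀ ch hg0
    have hpc_div : pstar c / g = pstar ch := by
      rw [hchdef, pstar_mul, hge]; exact mul_div_cancel_left₀ (pstar ch) hg0
    rwa [hc_div, hpc_div] at h1
  have hchNCR : ∀ δ : F, ch.eval δ = 0 → ch.eval (-δ) = 0 → False := by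
    intro δ ha hb
    exact ncr_of_isCoprime hchcop δ ha (by rwa [pstar_eval])
  -- the oriented norm half
  obtain ⟨w, hwg, hww, hwc⟩ := lemW h2 g.natDegree g ch le_rfl hg0 hge hgz hchNCR
  have hwne : w ≠ 0 := by
    rintro rfl; rw [zero_mul] at hwg; exact hg0 hwg.symm
  have hpwne : pstar w ≠ 0 := pstar_ne_zero hwne
  have hgc : c = w * pstar w * ch := by rw [hchdef, ← hgdef, ← hwg]
  have hgcs : pstar c = pstar w * w * pstar ch := by
    rw [hgc, pstar_mul, pstar_mul, pstar_pstar]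
  -- decompositions
  obtain ⟨d1, hdd1, hd1e⟩ := odd_decomp h2 hdd
  set e : F[X] := pstar w * ch with hedef
  have hene : e ≠ 0 := mul_ne_zero hpwne hchne
  have hpe' : pstar e = w * pstar ch := by rw [hedef, pstar_mul, pstar_pstar]
  obtain ⟨e0, e1, he0, he1, heq⟩ := even_odd_decomp h2 e
  have hpe : pstar e = e0 - X * e1 := pstar_decomp heq he0 he1
  -- IsCoprime e0 e1
  have hecop : IsCoprime e0 e1 := by
    apply isCoprime_of_ncr
    · by_cases h0 : e0 = 0
      · refine Or.inr fun h1 => hene ?_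
        rw [heq, h0, h1]; ring
      · exact Or.inl h0
    · intro δ h0 h1
      have hev : e.eval δ = 0 := by
        rw [heq]; simp [h0, h1]
      have hev2 : e.eval (-δ) = 0 := by
        rw [heq]
        simp [even_eval he0, even_eval he1, h0, h1]
      rw [hedef, eval_mul, pstar_eval] at hev hev2
      rw [neg_neg] at hev2
      rcases mul_eq_zero.1 hev with h | h
      · rcases mul_eq_zero.1 hev2 with h' | h'
        · exact hww δ h' h
        · exact hwc (-δ) h h'
      · rcases mul_eq_zero.1 hev2 with h' | h'
        · exact hwc δ h' h
        · exact hchNCR δ h h'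
  obtain ⟨pi1, rho1, hpi1, hrho1, hbez1⟩ := even_bezout h2 he0 he1 hecop
  -- build x
  set x0 : F[X] := -(C ((2:F)⁻¹) * d1 * rho1) with hx0def
  set x1 : F[X] := C ((2:F)⁻¹) * d1 * pi1 with hx1def
  have hx0e : pstar x0 = x0 := by
    rw [hx0def, pstar_neg, pstar_mul, pstar_mul, pstar_C, hd1e, hrho1]
  have hx1e : pstar x1 = x1 := by
    rw [hx1def, pstar_mul, pstar_mul, pstar_C, hd1e, hpi1]
  set x : F[X] := x0 + X * x1 with hxdef
  have hpx : pstar x = x0 - X * x1 := pstar_decomp hxdef hx0e hx1e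
  have hh := C_half_two h2
  have hKEY1 : pstar e * x - e * pstar x = dd := by
    rw [hpe, hpx, heq, hdd1, hxdef]
    linear_combination (2*X*e0) * hx1def + (-(2*X*e1)) * hx0def
      + (2*X*(C ((2:F)⁻¹))*d1) * hbez1 + (X*d1) * hh
  have hKEY : (w * pstar ch) * x - (pstar w * ch) * pstar x = dd := by
    rw [← hpe', ← hedef]; exact hKEY1
  -- unimodularity of (x, pstar w)
  have hxw : IsCoprime x (pstar w) := by
    apply isCoprime_of_ncr (Or.inr hpwne)
    intro δ hxδ hwδ
    rw [pstar_eval] at hwδ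
    refine hncz δ ?_ ?_ ?_ ?_
    · rw [hB00]; simp
    · rw [hB01, hgc]
      simp [eval_mul, pstar_eval, hwδ]
    · rw [hB10, hgcs]
      simp [eval_mul, pstar_eval, hwδ]
    · rw [hB11, ← hKEY]
      simp [eval_mul, eval_sub, pstar_eval, hwδ, hxδ]
  obtain ⟨u, v, huv⟩ := hxw
  have hsb : pstar u * pstar x + pstar v * w = 1 := by
    have h' := congrArg pstar huv
    rw [pstar_add, pstar_mul, pstar_mul, pstar_pstar, pstar_one] at h'
    exact h'
  set S2 : Matrix (Fin 2) (Fin 2) F[X] := !![x, -v; pstar w, u] with hS2def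
  have hdetS2 : S2.det = 1 := by
    rw [hS2def, Matrix.det_fin_two_of]
    linear_combination huv
  set c' : F[X] := w * w * pstar ch with hc'def
  have hpc' : pstar c' = pstar w * pstar w * ch := by
    rw [hc'def, pstar_mul, pstar_mul, pstar_pstar]
  set M : Matrix (Fin 2) (Fin 2) F[X] := mstar S2 * B1 * S2 with hMdef
  have hmulM : M = !![pstar x * 0 + w * (-pstar c), pstar x * c + w * dd;
      -pstar v * 0 + pstar u * (-pstar c), -pstar v * c + pstar u * dd] * S2 := by
    rw [hMdef, hS2def, hB1def, mstar_fin_two, pstar_neg, pstar_pstar, Matrix.mul_fin_two]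
  have hMlit : M = !![(pstar x * 0 + w * (-pstar c)) * x + (pstar x * c + w * dd) * pstar w,
      (pstar x * 0 + w * (-pstar c)) * (-v) + (pstar x * c + w * dd) * u;
      (-pstar v * 0 + pstar u * (-pstar c)) * x + (-pstar v * c + pstar u * dd) * pstar w,
      (-pstar v * 0 + pstar u * (-pstar c)) * (-v) + (-pstar v * c + pstar u * dd) * u] := by
    rw [hmulM, hS2def, Matrix.mul_fin_two]
  have hM00 : M 0 0 = 0 := by
    rw [hMlit]
    show (pstar x * 0 + w * (-pstar c)) * x + (pstar x * c + w * dd) * pstar w = 0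
    rw [hgcs, hgc, ← hKEY]
    ring
  have hM01 : M 0 1 = c' := by
    rw [hMlit]
    show (pstar x * 0 + w * (-pstar c)) * (-v) + (pstar x * c + w * dd) * u = c'
    rw [hgcs, hgc, ← hKEY, hc'def]
    linear_combination (w * w * pstar ch) * huv
  have hM10 : M 1 0 = -pstar c' := by
    rw [hMlit]
    show (-pstar v * 0 + pstar u * (-pstar c)) * x + (-pstar v * c + pstar u * dd) * pstar w
      = -pstar c'
    rw [hgcs, hgc, ← hKEY, hpc']
    linear_combination (-(pstar w * pstar w * ch)) * hsb
  set dd' : F[X] := M 1 1 with hdd'def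
  have hdd'odd : pstar dd' = -dd' := by
    rw [hdd'def, hMlit]
    show pstar ((-pstar v * 0 + pstar u * (-pstar c)) * (-v) + (-pstar v * c + pstar u * dd) * u)
      = -((-pstar v * 0 + pstar u * (-pstar c)) * (-v) + (-pstar v * c + pstar u * dd) * u)
    simp only [pstar_add, pstar_mul, pstar_neg, pstar_zero, pstar_pstar]
    linear_combination (u * pstar u) * hdd
  have hMfin : M = !![0, c'; -pstar c', dd'] := by
    rw [Matrix.eta_fin_two M, hM00, hM01, hM10, ← hdd'def]
  -- Step D : kill dd'
  obtain ⟨d1', hdd1', hd1'e⟩ := odd_decomp h2 hdd'odd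
  obtain ⟨c0', c1', hc0'e, hc1'e, hc'eq⟩ := even_odd_decomp h2 c'
  have hpc'2 : pstar c' = c0' - X * c1' := pstar_decomp hc'eq hc0'e hc1'e
  have hc'ne : c' ≠ 0 := by
    rw [hc'def]
    exact mul_ne_zero (mul_ne_zero hwne hwne) (pstar_ne_zero hchne)
  have hc'cop : IsCoprime c0' c1' := by
    apply isCoprime_of_ncr
    · by_cases h0 : c0' = 0
      · refine Or.inr fun h1 => hc'ne ?_
        rw [hc'eq, h0, h1]; ring
      · exact Or.inl h0
    · intro δ h0 h1
      have hev : c'.eval δ = 0 := by rw [hc'eq]; simp [h0, h1]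
      have hev2 : c'.eval (-δ) = 0 := by
        rw [hc'eq]; simp [even_eval hc0'e, even_eval hc1'e, h0, h1]
      rw [hc'def, eval_mul, eval_mul, pstar_eval] at hev hev2
      rw [neg_neg] at hev2
      rcases mul_eq_zero.1 hev with h | h
      · have hwδ : w.eval δ = 0 := by
          rcases mul_eq_zero.1 h with h' | h' <;> exact h'
        rcases mul_eq_zero.1 hev2 with h' | h'
        · have hwδ' : w.eval (-δ) = 0 := by
            rcases mul_eq_zero.1 h' with h'' | h'' <;> exact h''
          exact hww δ hwδ hwδ'
        · exact hwc δ hwδ h'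
      · rcases mul_eq_zero.1 hev2 with h' | h'
        · have hwδ' : w.eval (-δ) = 0 := by
            rcases mul_eq_zero.1 h' with h'' | h'' <;> exact h''
          exact hwc (-δ) hwδ' h
        · exact hchNCR δ h' h
  obtain ⟨pi3, rho3, hpi3, hrho3, hbez3⟩ := even_bezout h2 hc0'e hc1'e hc'cop
  set s0 : F[X] := -(C ((2:F)⁻¹) * d1' * rho3) with hs0def
  set s1 : F[X] := C ((2:F)⁻¹) * d1' * pi3 with hs1def
  have hs0e : pstar s0 = s0 := by
    rw [hs0def, pstar_neg, pstar_mul, pstar_mul, pstar_C, hd1'e, hrho3]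
  have hs1e : pstar s1 = s1 := by
    rw [hs1def, pstar_mul, pstar_mul, pstar_C, hd1'e, hpi3]
  set s : F[X] := s0 + X * s1 with hsdef
  have hps : pstar s = s0 - X * s1 := pstar_decomp hsdef hs0e hs1e
  set S3 : Matrix (Fin 2) (Fin 2) F[X] := !![1, s; 0, 1] with hS3def
  have hdetS3 : S3.det = 1 := by
    rw [hS3def, Matrix.det_fin_two_of]; ring
  have hkill : -pstar c' * s + (pstar s * c' + dd' * 1) = 0 := by
    rw [hpc'2, hps, hc'eq, hdd1', hsdef]
    linear_combination (2*X*c1') * hs0def + (-(2*X*c0')) * hs1def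
      + (-(2*X*(C ((2:F)⁻¹))*d1')) * hbez3 + (-(X*d1')) * hh
  have hB3 : mstar S3 * M * S3 = !![0, c'; -pstar c', 0] := by
    rw [hMfin, hS3def, mstar_fin_two, pstar_one, pstar_zero, Matrix.mul_fin_two,
      Matrix.mul_fin_two]
    apply Matrix.ext
    intro i j
    fin_cases i <;> fin_cases j <;> simp <;> linear_combination hkill
  refine ⟨!![0, c'; -pstar c', 0], ?_, by simp, by simp⟩
  have hcong1 : MatCongruent B1 M := ⟨S2, by rw [hdetS2]; exact isUnit_one, hMdef⟩
  have hcong2 : MatCongruent M !![0, c'; -pstar c', 0] :=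
    ⟨S3, by rw [hdetS3]; exact isUnit_one, hB3.symm⟩
  exact congruent_trans hcong1 hcong2

end SkewMain

namespace SkewFinal

open SkewAux SkewAux2 SkewMat SkewMain

theorem main {F : Type*} [Field F]
    [IsAlgClosed F] (h2 : (2 : F) ≠ 0)
    (A : Matrix (Fin 2) (Fin 2) F[X]) (hA : mstar A = -A)
    (hdet : A.det ≠ 0)
    (hgcd : Ideal.span (Set.range fun p : Fin 2 × Fin 2 => A p.1 p.2) = ⊤) :
    ∃ B : Matrix (Fin 2) (Fin 2) F[X], MatCongruent A B ∧ B 0 0 = 0 ∧ B 1 1 = 0 := by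
  classical
  have hncz : NCZ A := ncz_of_span hgcd
  have hAe : ∀ i j, pstar (A j i) = -(A i j) := by
    intro i j
    have h := congrFun (congrFun hA i) j
    rw [Matrix.neg_apply] at h
    exact h
  set a : F[X] := A 0 0 with hadef
  set b : F[X] := A 0 1 with hbdef
  set d : F[X] := A 1 1 with hddef
  have ha : pstar a = -a := hAe 0 0
  have hd : pstar d = -d := hAe 1 1
  have hb10 : A 1 0 = -pstar b := by
    have h := congrArg pstar (hAe 0 1)
    rw [pstar_pstar, pstar_neg] at h
    exact h
  have hAeta : A = !![a, b; -pstar b, d] := by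
    rw [Matrix.eta_fin_two A, hb10, ← hadef, ← hbdef, ← hddef]
  by_cases haz : a = 0
  · -- A already has a zero corner
    have hAeta' : A = !![0, b; -pstar b, d] := by rw [hAeta, haz]
    have hncz' : NCZ !![0, b; -pstar b, d] := by rw [← hAeta']; exact hncz
    obtain ⟨B, hcong, h00, h11⟩ := stepCD h2 b d hd hncz'
    refine ⟨B, ?_, h00, h11⟩
    rw [hAeta']
    exact hcong
  · set D : F[X] := a * d + b * pstar b with hDdef
    have hDval : A.det = D := by
      rw [Matrix.det_fin_two, hb10, ← hadef, ← hbdef, ← hddef, hDdef]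
      ring
    have hDne : D ≠ 0 := by rw [← hDval]; exact hdet
    have hDe : pstar D = D := by
      rw [hDdef, pstar_add, pstar_mul, pstar_mul, pstar_pstar, ha, hd]
      ring
    obtain ⟨z, hz⟩ := normhalf h2 hDne hDe
    set h : F[X] := GCDMonoid.gcd (z - b) a with hhdef
    have hh0 : h ≠ 0 := by rw [hhdef]; exact gcd_ne_zero_of_right haz
    have hdl : h ∣ z - b := by rw [hhdef]; exact gcd_dvd_left _ _
    have hdr : h ∣ a := by rw [hhdef]; exact gcd_dvd_right _ _
    obtain ⟨p, hp⟩ := hdl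
    obtain ⟨q, hq⟩ := hdr
    have hcoppq : IsCoprime p q := by
      have h1 := isCoprime_div_gcd_div_gcd (p := z - b) (q := a) haz
      rw [← hhdef] at h1
      have h2a : (z - b) / h = p := by rw [hp]; exact mul_div_cancel_left₀ p hh0
      have h2b : a / h = q := by rw [hq]; exact mul_div_cancel_left₀ q hh0
      rwa [h2a, h2b] at h1
    obtain ⟨pi0, rho0, hbez0⟩ := hcoppq
    set S1 : Matrix (Fin 2) (Fin 2) F[X] := !![p, -rho0; q, pi0] with hS1def
    have hdetS1 : S1.det = 1 := by
      rw [hS1def, Matrix.det_fin_two_of]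
      linear_combination hbez0
    -- star equations
    have e1 : h * p = z - b := hp.symm
    have e2 : h * q = a := hq.symm
    have e3 : pstar h * pstar p = pstar z - pstar b := by
      rw [← pstar_mul, e1, pstar_sub]
    have e4 : pstar h * pstar q = -a := by
      rw [← pstar_mul, e2, ha]
    have e5 : z * pstar z = a * d + b * pstar b := by rw [hz, hDdef]
    set M1 : Matrix (Fin 2) (Fin 2) F[X] := mstar S1 * A * S1 with hM1def
    have hM1lit : M1 = !![(pstar p * a + pstar q * (-pstar b)) * p + (pstar p * b + pstar q * d) * q,
        (pstar p * a + pstar q * (-pstar b)) * (-rho0) + (pstar p * b + pstar q * d) * pi0;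
        (-pstar rho0 * a + pstar pi0 * (-pstar b)) * p + (-pstar rho0 * b + pstar pi0 * d) * q,
        (-pstar rho0 * a + pstar pi0 * (-pstar b)) * (-rho0) + (-pstar rho0 * b + pstar pi0 * d) * pi0] := by
      rw [hM1def, hAeta, hS1def, mstar_fin_two, pstar_neg, Matrix.mul_fin_two, Matrix.mul_fin_two]
    have hhh : h * pstar h ≠ 0 := mul_ne_zero hh0 (pstar_ne_zero hh0)
    have hM00 : M1 0 0 = 0 := by
      rw [hM1lit]
      show (pstar p * a + pstar q * (-pstar b)) * p + (pstar p * b + pstar q * d) * q = 0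
      apply mul_left_cancel₀ hhh
      rw [mul_zero]
      linear_combination (a * (pstar h * pstar p) - pstar b * (pstar h * pstar q)) * e1
        + (b * (pstar h * pstar p) + d * (pstar h * pstar q)) * e2
        + (a * z) * e3 + (a * d - pstar b * z + pstar b * b) * e4 + a * e5
    have hMskew : pstar (M1 0 1) = -(M1 1 0) := by
      rw [hM1lit]
      show pstar ((pstar p * a + pstar q * (-pstar b)) * (-rho0) + (pstar p * b + pstar q * d) * pi0)
        = -((-pstar rho0 * a + pstar pi0 * (-pstar b)) * p + (-pstar rho0 * b + pstar pi0 * d) * q)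
      simp only [pstar_add, pstar_mul, pstar_neg, pstar_pstar]
      linear_combination (-(p * pstar rho0)) * ha + (q * pstar pi0) * hd
    have hModd : pstar (M1 1 1) = -(M1 1 1) := by
      rw [hM1lit]
      show pstar ((-pstar rho0 * a + pstar pi0 * (-pstar b)) * (-rho0) + (-pstar rho0 * b + pstar pi0 * d) * pi0)
        = -((-pstar rho0 * a + pstar pi0 * (-pstar b)) * (-rho0) + (-pstar rho0 * b + pstar pi0 * d) * pi0)
      simp only [pstar_add, pstar_mul, pstar_neg, pstar_pstar]
      linear_combination (rho0 * pstar rho0) * ha + (pi0 * pstar pi0) * hd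
    have hM10 : M1 1 0 = -pstar (M1 0 1) := by linear_combination hMskew
    have hM1fin : M1 = !![0, M1 0 1; -pstar (M1 0 1), M1 1 1] := by
      apply Matrix.ext
      intro i j
      fin_cases i <;> fin_cases j
      · simpa using hM00
      · simp
      · simpa using hM10
      · simp
    have hS1unit : IsUnit S1.det := by rw [hdetS1]; exact isUnit_one
    have hnczM1 : NCZ M1 := ncz_congruent hS1unit hM1def hncz
    have hnczlit : NCZ !![0, M1 0 1; -pstar (M1 0 1), M1 1 1] := by
      rw [← hM1fin]; exact hnczM1
    obtain ⟨B, hcongB, h00, h11⟩ := stepCD h2 (M1 0 1) (M1 1 1) hModd hnczlit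
    refine ⟨B, ?_, h00, h11⟩
    have hcong1 : MatCongruent A !![0, M1 0 1; -pstar (M1 0 1), M1 1 1] :=
      ⟨S1, hS1unit, by rw [← hM1fin, hM1def]⟩
    exact congruent_trans hcong1 hcongB

end SkewFinal

/-- A `2×2` skew-hermitian matrix over `F[t]` with nonzero determinant whose
entries generate the unit ideal is congruent to a matrix with zero diagonal. -/
theorem skewHermitian_two_by_two_congruent_zeroDiag {F : Type*} [Field F]
    [IsAlgClosed F] (h2 : (2 : F) ≠ 0)
    (A : Matrix (Fin 2) (Fin 2) F[X]) (hA : mstar A = -A)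
    (hdet : A.det ≠ 0)
    (hgcd : Ideal.span (Set.range fun p : Fin 2 × Fin 2 => A p.1 p.2) = ⊤) :
    ∃ B : Matrix (Fin 2) (Fin 2) F[X], MatCongruent A B ∧ B 0 0 = 0 ∧ B 1 1 = 0 :=
  SkewFinal.main h2 A hA hdet hgcd
end

section
/- Let a, b ∈ F[t] with a pure (i.e., gcd(a, a*) = 1) and b odd (i.e., b* = −b). Then there exists x ∈ F[t] such that a x − a* x* = b. -/
open Polynomial

/-- If `a ∈ F[t]` is pure and `b` is odd, then `a x - a* x* = b` for some `x`. -/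
theorem pure_solves_odd {F : Type*} [Field F] [IsAlgClosed F]
    (h2 : (2 : F) ≠ 0) (a b : F[X])
    (ha : IsCoprime a (pstar a)) (hb : pstar b = -b) :
    ∃ x : F[X], a * x - pstar a * pstar x = b := by
  obtain ⟨u, v, huv⟩ := ha
  have hstar : ∀ p : F[X], pstar (pstar p) = p := by
    intro p
    simp [pstar, comp_assoc]
  have h1 : pstar u * pstar a + pstar v * a = 1 := by
    have h := congrArg pstar huv
    simp only [pstar, add_comp, mul_comp, one_comp] at h ⊢
    rwa [comp_assoc, neg_comp, X_comp, neg_neg, comp_X] at h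
  have h2' : (C (2⁻¹ : F) : F[X]) * 2 = 1 := by
    rw [← map_ofNat (C : F →+* F[X]) 2, ← C_mul, inv_mul_cancel₀ h2, C_1]
  refine ⟨C (2⁻¹ : F) * (u + pstar v) * b, ?_⟩
  have hexp : pstar (C (2⁻¹ : F) * (u + pstar v) * b)
      = C (2⁻¹ : F) * (pstar u + v) * (-b) := by
    simp only [pstar] at hb ⊢
    simp [mul_comp, add_comp, C_comp, comp_assoc, hb]
  rw [hexp]
  linear_combination (C (2⁻¹ : F) * b) * huv + (C (2⁻¹ : F) * b) * h1 + b * h2'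
end

section
/- Over the real field F = ℝ, the hermitian matrix A ∈ M_3(ℝ[t]) with rows (t², 1, 0), (1, t², t), (0, −t, t²) is not congruent to any block-diagonal matrix B ⊕ C in which one block has size 1 and the other size 2 (in either order); in particular A is not congruent to any direct sum of 1×1 and 2×2 matrices. -/
open Polynomial

namespace RealCounterexample

lemma pstar_coeff (p : ℝ[X]) (n : ℕ) : (pstar p).coeff n = (-1) ^ n * p.coeff n := by
  induction p using Polynomial.induction_on' with
  | add p q hp hq => simp only [pstar, add_comp, coeff_add] at *; rw [hp, hq]; ring
  | monomial k a =>
    have h1 : ((monomial k a : ℝ[X])).comp (-X) = C ((-1) ^ k * a) * X ^ k := by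
      rw [monomial_comp, neg_pow, map_mul, map_pow, map_neg, map_one]
      ring
    rw [pstar, h1, coeff_C_mul, coeff_X_pow, coeff_monomial]
    rcases eq_or_ne n k with rfl | h
    · simp
    · simp [h, Ne.symm h]

lemma pstar_natDegree_le (p : ℝ[X]) : (pstar p).natDegree ≤ p.natDegree := by
  refine natDegree_le_iff_coeff_eq_zero.mpr fun m hm => ?_
  rw [pstar_coeff, coeff_eq_zero_of_natDegree_lt hm, mul_zero]

lemma pstar_pstar (p : ℝ[X]) : pstar (pstar p) = p := by
  simp only [pstar, comp_assoc, neg_comp, X_comp, neg_neg, comp_X]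

lemma pstar_ne_zero {p : ℝ[X]} (hp : p ≠ 0) : pstar p ≠ 0 := by
  intro h
  apply hp
  rw [← pstar_pstar p, h, pstar, zero_comp]

lemma pstar_eq_ringHom (p : ℝ[X]) : pstar p = eval₂RingHom (C : ℝ →+* ℝ[X]) (-X) p := rfl

lemma mstar_det {n : ℕ} (S : Matrix (Fin n) (Fin n) ℝ[X]) : (mstar S).det = pstar S.det := by
  have h : mstar S = (S.transpose.map (eval₂RingHom (C : ℝ →+* ℝ[X]) (-X))) := by
    ext i j
    simp [mstar, Matrix.map_apply, Matrix.transpose_apply, pstar_eq_ringHom]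
  rw [h, ← RingHom.mapMatrix_apply, ← RingHom.map_det, Matrix.det_transpose, pstar_eq_ringHom]

lemma coeff_self_mul_pstar (p : ℝ[X]) {N : ℕ} (h : p.natDegree ≤ N) :
    (p * pstar p).coeff (2 * N) = (-1) ^ N * (p.coeff N) ^ 2 := by
  rw [coeff_mul, Finset.sum_eq_single (N, N)]
  · rw [pstar_coeff]; ring
  · rintro ⟨i, j⟩ hmem hne
    rw [Finset.HasAntidiagonal.mem_antidiagonal] at hmem
    rcases lt_or_ge N i with hi | hi
    · rw [coeff_eq_zero_of_natDegree_lt (lt_of_le_of_lt h hi), zero_mul]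
    · have hij : i ≠ N := by
        intro hiN; apply hne; rw [hiN] at hmem ⊢; simp; omega
      have hj : N < j := by omega
      rw [pstar_coeff, coeff_eq_zero_of_natDegree_lt (lt_of_le_of_lt h hj), mul_zero, mul_zero]
  · intro hmem
    exact absurd (Finset.HasAntidiagonal.mem_antidiagonal.mpr (by ring)) hmem

/-- The key arithmetic lemma: there is no vector `(x,y,z)` over `ℝ[t]` whose value
`b` under the form is nonzero and divides all entries of `v* A`. -/
lemma key (x y z b : ℝ[X]) (hb : b ≠ 0)
    (h0 : b ∣ pstar x * X ^ 2 + pstar y)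
    (h1 : b ∣ pstar x + pstar y * X ^ 2 - pstar z * X)
    (h2 : b ∣ pstar y * X + pstar z * X ^ 2)
    (heq : b = (pstar x * X ^ 2 + pstar y) * x
          + (pstar x + pstar y * X ^ 2 - pstar z * X) * y
          + (pstar y * X + pstar z * X ^ 2) * z) : False := by
  set N := max x.natDegree (max y.natDegree z.natDegree) with hN
  have hx : x.natDegree ≤ N := le_max_left _ _
  have hy : y.natDegree ≤ N := le_trans (le_max_left _ _) (le_max_right _ _)
  have hzd : z.natDegree ≤ N := le_trans (le_max_right _ _) (le_max_right _ _)
  -- regrouped form of b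
  have hb2 : b = X ^ 2 * (x * pstar x + y * pstar y + z * pstar z)
      + (pstar y * x + pstar x * y) + X * (pstar y * z - pstar z * y) := by
    rw [heq]; ring
  -- the top coefficient of b
  have hcoeff : b.coeff (2 * N + 2) =
      (-1) ^ N * ((x.coeff N) ^ 2 + (y.coeff N) ^ 2 + (z.coeff N) ^ 2) := by
    rw [hb2]
    rw [coeff_add, coeff_add]
    have hXsq : (X ^ 2 * (x * pstar x + y * pstar y + z * pstar z) : ℝ[X]).coeff (2 * N + 2)
        = (x * pstar x + y * pstar y + z * pstar z).coeff (2 * N) := by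
      exact coeff_X_pow_mul _ 2 (2 * N)
    have hc1 : ((pstar y * x + pstar x * y : ℝ[X])).coeff (2 * N + 2) = 0 := by
      apply coeff_eq_zero_of_natDegree_lt
      apply lt_of_le_of_lt (natDegree_add_le _ _)
      have b1 : (pstar y * x).natDegree ≤ 2 * N := by
        apply le_trans (natDegree_mul_le)
        have := pstar_natDegree_le y; omega
      have b2 : (pstar x * y).natDegree ≤ 2 * N := by
        apply le_trans (natDegree_mul_le)
        have := pstar_natDegree_le x; omega
      omega
    have hc2 : ((X * (pstar y * z - pstar z * y) : ℝ[X])).coeff (2 * N + 2) = 0 := by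
      apply coeff_eq_zero_of_natDegree_lt
      apply lt_of_le_of_lt (natDegree_mul_le)
      have b1 : (pstar y * z).natDegree ≤ 2 * N := by
        apply le_trans (natDegree_mul_le)
        have := pstar_natDegree_le y; omega
      have b2 : (pstar z * y).natDegree ≤ 2 * N := by
        apply le_trans (natDegree_mul_le)
        have := pstar_natDegree_le z; omega
      have := natDegree_sub_le (pstar y * z) (pstar z * y)
      have hX : (X : ℝ[X]).natDegree = 1 := natDegree_X
      omega
    rw [hXsq, hc1, hc2, add_zero, add_zero, coeff_add, coeff_add,
      coeff_self_mul_pstar x hx, coeff_self_mul_pstar y hy, coeff_self_mul_pstar z hzd]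
    ring
  -- not all of x, y, z are zero
  have hnz : ¬ (x = 0 ∧ y = 0 ∧ z = 0) := by
    rintro ⟨rfl, rfl, rfl⟩
    apply hb
    rw [heq]; simp [pstar, zero_comp]
  -- the top coefficient is nonzero
  have hsum : (x.coeff N) ^ 2 + (y.coeff N) ^ 2 + (z.coeff N) ^ 2 ≠ 0 := by
    have hattain : ∃ w : ℝ[X], w ≠ 0 ∧ w.natDegree = N ∧
        (w = x ∨ w = y ∨ w = z) := by
      rcases Nat.eq_zero_or_pos N with h0 | hpos
      · by_cases hx0 : x = 0
        · by_cases hy0 : y = 0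
          · have hz0 : z ≠ 0 := fun h => hnz ⟨hx0, hy0, h⟩
            exact ⟨z, hz0, by omega, Or.inr (Or.inr rfl)⟩
          · exact ⟨y, hy0, by omega, Or.inr (Or.inl rfl)⟩
        · exact ⟨x, hx0, by omega, Or.inl rfl⟩
      · have hor : x.natDegree = N ∨ y.natDegree = N ∨ z.natDegree = N := by omega
        rcases hor with h | h | h
        · exact ⟨x, fun hx0 => by rw [hx0, natDegree_zero] at h; omega, h, Or.inl rfl⟩
        · exact ⟨y, fun hy0 => by rw [hy0, natDegree_zero] at h; omega, h,
            Or.inr (Or.inl rfl)⟩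
        · exact ⟨z, fun hz0 => by rw [hz0, natDegree_zero] at h; omega, h,
            Or.inr (Or.inr rfl)⟩
    obtain ⟨w, hw0, hwN, hwmem⟩ := hattain
    have hwc : w.coeff N ≠ 0 := by
      rw [← hwN]; exact leadingCoeff_ne_zero.mpr hw0
    have hwc2 : (0:ℝ) < w.coeff N ^ 2 := by positivity
    intro hzero
    rcases hwmem with h | h | h <;> rw [h] at hwc2 <;>
      nlinarith [sq_nonneg (x.coeff N), sq_nonneg (y.coeff N), sq_nonneg (z.coeff N)]
  have hbc : b.coeff (2 * N + 2) ≠ 0 := by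
    rw [hcoeff]
    intro h
    rcases mul_eq_zero.mp h with h' | h'
    · exact absurd h' (pow_ne_zero _ (by norm_num))
    · exact hsum h'
  have hdegb : 2 * N + 2 ≤ b.natDegree := le_natDegree_of_ne_zero hbc
  -- degree bounds for the three row entries
  have hd0 : (pstar x * X ^ 2 + pstar y).natDegree ≤ N + 2 := by
    apply le_trans (natDegree_add_le _ _)
    have b1 : (pstar x * X ^ 2).natDegree ≤ N + 2 := by
      apply le_trans (natDegree_mul_le)
      have := pstar_natDegree_le x
      have : ((X : ℝ[X]) ^ 2).natDegree = 2 := natDegree_X_pow 2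
      have := pstar_natDegree_le x
      omega
    have b2 := le_trans (pstar_natDegree_le y) hy
    omega
  have hd1 : (pstar x + pstar y * X ^ 2 - pstar z * X).natDegree ≤ N + 2 := by
    apply le_trans (natDegree_sub_le _ _)
    have b1 : (pstar x + pstar y * X ^ 2).natDegree ≤ N + 2 := by
      apply le_trans (natDegree_add_le _ _)
      have b2 := le_trans (pstar_natDegree_le x) hx
      have b3 : (pstar y * X ^ 2).natDegree ≤ N + 2 := by
        apply le_trans (natDegree_mul_le)
        have := pstar_natDegree_le y
        have h2 : ((X : ℝ[X]) ^ 2).natDegree = 2 := natDegree_X_pow 2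
        omega
      omega
    have b4 : (pstar z * X).natDegree ≤ N + 1 := by
      apply le_trans (natDegree_mul_le)
      have := pstar_natDegree_le z
      have h2 : (X : ℝ[X]).natDegree = 1 := natDegree_X
      omega
    omega
  have hd2 : (pstar y * X + pstar z * X ^ 2).natDegree ≤ N + 2 := by
    apply le_trans (natDegree_add_le _ _)
    have b1 : (pstar y * X).natDegree ≤ N + 1 := by
      apply le_trans (natDegree_mul_le)
      have := pstar_natDegree_le y
      have h2 : (X : ℝ[X]).natDegree = 1 := natDegree_X
      omega
    have b2 : (pstar z * X ^ 2).natDegree ≤ N + 2 := by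
      apply le_trans (natDegree_mul_le)
      have := pstar_natDegree_le z
      have h2 : ((X : ℝ[X]) ^ 2).natDegree = 2 := natDegree_X_pow 2
      omega
    omega
  rcases Nat.eq_zero_or_pos N with hN0 | hNpos
  · -- N = 0 : x, y, z are constants
    have hxC : x = C (x.coeff 0) := eq_C_of_natDegree_le_zero (by omega)
    have hyC : y = C (y.coeff 0) := eq_C_of_natDegree_le_zero (by omega)
    have hzC : z = C (z.coeff 0) := eq_C_of_natDegree_le_zero (by omega)
    set a := x.coeff 0 with ha
    set c := y.coeff 0 with hc
    set d := z.coeff 0 with hd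
    have hpa : pstar x = C a := by rw [hxC, pstar, C_comp]
    have hpc : pstar y = C c := by rw [hyC, pstar, C_comp]
    have hpd : pstar z = C d := by rw [hzC, pstar, C_comp]
    have hbC : b = C (a ^ 2 + c ^ 2 + d ^ 2) * X ^ 2 + C (2 * (a * c)) := by
      rw [heq, hpa, hpc, hpd, hxC, hyC, hzC]
      simp only [map_add, map_mul, map_pow, map_ofNat]
      ring
    have hs : a ^ 2 + c ^ 2 + d ^ 2 ≠ 0 := by
      have h' := hsum; rw [hN0] at h'; exact h'
    have hbcoeff2 : b.coeff 2 = a ^ 2 + c ^ 2 + d ^ 2 := by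
      rw [hbC, coeff_add, coeff_C_mul, coeff_X_pow, coeff_C]; norm_num
    have hbcoeff1 : b.coeff 1 = 0 := by
      rw [hbC, coeff_add, coeff_C_mul, coeff_X_pow, coeff_C]; norm_num
    have hdb : b.natDegree = 2 := by
      have hle : b.natDegree ≤ 2 := by
        rw [hbC]
        apply le_trans (natDegree_add_le _ _)
        apply max_le
        · apply le_trans natDegree_mul_le
          rw [natDegree_C, natDegree_X_pow]
        · rw [natDegree_C]; omega
      have hge : 2 ≤ b.natDegree := le_natDegree_of_ne_zero (hbcoeff2 ▸ hs)
      omega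
    have hcoeffr2 : (C c * X + C d * X ^ 2 : ℝ[X]).coeff 1 = c := by
      rw [coeff_add, coeff_C_mul, coeff_C_mul, coeff_X_one, coeff_X_pow]; norm_num
    -- first show c = 0 using h2
    have hc0 : c = 0 := by
      rw [hpc, hpd] at h2
      obtain ⟨q, hq⟩ := h2
      by_cases hr2 : C c * X + C d * X ^ 2 = (0 : ℝ[X])
      · rw [hr2, coeff_zero] at hcoeffr2; exact hcoeffr2.symm
      · have hq0 : q ≠ 0 := by
          intro h; rw [h, mul_zero] at hq; exact hr2 hq
        have hdeg : (C c * X + C d * X ^ 2 : ℝ[X]).natDegree ≤ 2 := by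
          apply le_trans (natDegree_add_le _ _)
          apply max_le
          · apply le_trans natDegree_mul_le
            rw [natDegree_C, natDegree_X]; omega
          · apply le_trans natDegree_mul_le
            rw [natDegree_C, natDegree_X_pow]
        have hdeg2 : (b * q).natDegree = 2 + q.natDegree := by
          rw [natDegree_mul hb hq0, hdb]
        have hqdeg : q.natDegree = 0 := by
          rw [← hq] at hdeg2; omega
        have hqC : q = C (q.coeff 0) := eq_C_of_natDegree_le_zero (by omega)
        have hthis : (C c * X + C d * X ^ 2 : ℝ[X]).coeff 1 = (b * q).coeff 1 := by
          rw [hq]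
        rw [hqC, mul_comm b, coeff_C_mul, hbcoeff1, mul_zero, hcoeffr2] at hthis
        exact hthis
    -- now r1 = C a - C d * X has degree < 2, so it is 0
    have hr1 : C a + C c * X ^ 2 - C d * X = (0 : ℝ[X]) := by
      rw [hpa, hpc, hpd] at h1
      by_contra hne
      have hled := natDegree_le_of_dvd h1 hne
      have hdeg : (C a + C c * X ^ 2 - C d * X : ℝ[X]).natDegree ≤ 1 := by
        rw [hc0, map_zero, zero_mul, add_zero]
        apply le_trans (natDegree_sub_le _ _)
        apply max_le
        · rw [natDegree_C]; omega
        · apply le_trans natDegree_mul_le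
          rw [natDegree_C, natDegree_X]
      omega
    have ha0 : a = 0 := by
      have e0 : (C a + C c * X ^ 2 - C d * X : ℝ[X]).coeff 0 = a := by
        rw [coeff_sub, coeff_add, coeff_C, coeff_C_mul, coeff_C_mul, coeff_X_pow,
          coeff_X_zero]
        norm_num
      rw [hr1, coeff_zero] at e0; exact e0.symm
    have hd0' : d = 0 := by
      have e1 : (C a + C c * X ^ 2 - C d * X : ℝ[X]).coeff 1 = -d := by
        rw [coeff_sub, coeff_add, coeff_C, coeff_C_mul, coeff_C_mul, coeff_X_pow,
          coeff_X_one]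
        norm_num
      rw [hr1, coeff_zero] at e1
      linarith [e1]
    exact hs (by rw [ha0, hc0, hd0']; ring)
  · -- N ≥ 1 : all three row entries must vanish since deg b = 2N+2 > N+2
    have hlt : N + 2 < 2 * N + 2 := by omega
    have hz0 : pstar x * X ^ 2 + pstar y = 0 := by
      by_contra hne
      have := natDegree_le_of_dvd h0 hne
      omega
    have hz1 : pstar x + pstar y * X ^ 2 - pstar z * X = 0 := by
      by_contra hne
      have := natDegree_le_of_dvd h1 hne
      omega
    have hz2 : pstar y * X + pstar z * X ^ 2 = 0 := by
      by_contra hne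
      have := natDegree_le_of_dvd h2 hne
      omega
    apply hb
    rw [heq, hz0, hz1, hz2]
    ring

/-- If `B = S* A S` has all off-`e` entries of row `e` equal to zero, we reach a
contradiction. -/
lemma no_split (S B : Matrix (Fin 3) (Fin 3) ℝ[X]) (hdet : IsUnit S.det)
    (hB : B = mstar S * !![X ^ 2, 1, 0; 1, X ^ 2, X; 0, -X, X ^ 2] * S)
    (e : Fin 3) (hz : ∀ j, j ≠ e → B e j = 0) : False := by
  set A : Matrix (Fin 3) (Fin 3) ℝ[X] := !![X ^ 2, 1, 0; 1, X ^ 2, X; 0, -X, X ^ 2] with hA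
  have hr0 : (mstar S * A) e 0 = pstar (S 0 e) * X ^ 2 + pstar (S 1 e) := by
    rw [Matrix.mul_apply, Fin.sum_univ_three, hA]
    simp [mstar]
  have hr1 : (mstar S * A) e 1 = pstar (S 0 e) + pstar (S 1 e) * X ^ 2 - pstar (S 2 e) * X := by
    rw [Matrix.mul_apply, Fin.sum_univ_three, hA]
    simp [mstar]
    ring
  have hr2 : (mstar S * A) e 2 = pstar (S 1 e) * X + pstar (S 2 e) * X ^ 2 := by
    rw [Matrix.mul_apply, Fin.sum_univ_three, hA]
    simp [mstar]
  have hBSinv : B * S⁻¹ = mstar S * A := by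
    rw [hB, Matrix.mul_assoc, Matrix.mul_nonsing_inv S hdet, Matrix.mul_one]
  have hdvd : ∀ l, B e e ∣ (mstar S * A) e l := by
    intro l
    refine ⟨S⁻¹ e l, ?_⟩
    rw [← hBSinv, Matrix.mul_apply]
    rw [Finset.sum_eq_single e (fun j _ hj => by rw [hz j hj, zero_mul]) (by simp)]
  have heq : B e e = (mstar S * A) e 0 * S 0 e
      + (mstar S * A) e 1 * S 1 e + (mstar S * A) e 2 * S 2 e := by
    conv_lhs => rw [hB]
    rw [Matrix.mul_apply, Fin.sum_univ_three]
  have hdetA : A.det ≠ 0 := by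
    have hdA : A.det = X ^ 6 + X ^ 4 - X ^ 2 := by
      rw [Matrix.det_fin_three, hA]
      simp
      ring
    rw [hdA]
    intro h
    have h2 := congrArg (Polynomial.eval (2 : ℝ)) h
    simp at h2
    norm_num at h2
  have hdetB : B.det ≠ 0 := by
    rw [hB, Matrix.det_mul, Matrix.det_mul, mstar_det]
    exact mul_ne_zero (mul_ne_zero (pstar_ne_zero hdet.ne_zero) hdetA) hdet.ne_zero
  have hbne : B e e ≠ 0 := by
    intro h0
    apply hdetB
    apply Matrix.det_eq_zero_of_row_eq_zero e
    intro j
    by_cases hj : j = e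
    · rw [hj]; exact h0
    · exact hz j hj
  rw [hr0, hr1, hr2] at heq
  have h0 := hdvd 0; rw [hr0] at h0
  have h1 := hdvd 1; rw [hr1] at h1
  have h2 := hdvd 2; rw [hr2] at h2
  exact key (S 0 e) (S 1 e) (S 2 e) (B e e) hbne h0 h1 h2 heq

end RealCounterexample

/-- Over `ℝ[t]`, the hermitian matrix with rows `(t², 1, 0)`, `(1, t², t)`,
`(0, -t, t²)` is not congruent to any block-diagonal matrix with one block of
size `1` and one of size `2`, in either order (hence not to any direct sum of
`1×1` and `2×2` matrices). -/
theorem real_counterexample_not_decomposable :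
    ¬ ∃ B : Matrix (Fin 3) (Fin 3) ℝ[X],
      MatCongruent (!![X ^ 2, 1, 0; 1, X ^ 2, X; 0, -X, X ^ 2]) B ∧
      ((B 0 1 = 0 ∧ B 0 2 = 0 ∧ B 1 0 = 0 ∧ B 2 0 = 0) ∨
       (B 0 2 = 0 ∧ B 1 2 = 0 ∧ B 2 0 = 0 ∧ B 2 1 = 0)) := by
  rintro ⟨B, ⟨S, hdet, hB⟩, hcase | hcase⟩
  · apply RealCounterexample.no_split S B hdet hB 0
    intro j hj
    fin_cases j
    · exact absurd rfl hj
    · exact hcase.1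
    · exact hcase.2.1
  · apply RealCounterexample.no_split S B hdet hB 2
    intro j hj
    fin_cases j
    · exact hcase.2.2.1
    · exact hcase.2.2.2
    · exact absurd rfl hj
end
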